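/- arXiv:math/0501117 — 2 statements merged into one kernel-verified Lean document; each statement's English description precedes it below -/
import Mathlib

section
/- The cocycle $x = :\beta\gamma^2: - :bc\gamma: + \frac32\partial\gamma$ is not a BRST coboundary: $x \notin [Q, \mathcal W]$. Hence $x$ represents a nonzero class in $H^{0,1}$ of the semi-infinite Weil complex of the Virasoro algebra. -/
open scoped BigOperators

/-- Generalized binomial coefficient `m choose j` for an integer `m`, as a complex number. -/
noncomputable def zchoose (m : ℤ) (j : ℕ) : ℂ :=
  (∏ i ∈ Finset.range j, ((m : ℂ) - (i : ℂ))) / (Nat.factorial j : ℂ)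

/-- A vertex superalgebra presented via its circle products `∘ₙ`, in the sense of
Lian-Zuckerman (a commutative quantum operator algebra).  The parity grading is recorded by
the submodules `even`, `odd`; `comm_even`/`comm_odd` encode the Borcherds commutator formula
for the Fourier modes acting on the left regular module, and `iterate_even`/`iterate_odd`
encode the iterate (associativity) formula. -/
structure VA (V : Type) [AddCommGroup V] [Module ℂ V] where
  circ : ℤ → V →ₗ[ℂ] V →ₗ[ℂ] V
  one : V
  even : Submodule ℂ V
  odd : Submodule ℂ V
  one_even : one ∈ even
  circ_ee : ∀ (n : ℤ) {a b : V}, a ∈ even → b ∈ even → circ n a b ∈ even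
  circ_oo : ∀ (n : ℤ) {a b : V}, a ∈ odd → b ∈ odd → circ n a b ∈ even
  circ_eo : ∀ (n : ℤ) {a b : V}, a ∈ even → b ∈ odd → circ n a b ∈ odd
  circ_oe : ∀ (n : ℤ) {a b : V}, a ∈ odd → b ∈ even → circ n a b ∈ odd
  unit_left : ∀ (n : ℤ) (a : V), circ n one a = if n = -1 then a else 0
  unit_right_wick : ∀ a : V, circ (-1) a one = a
  unit_right_nonneg : ∀ (n : ℤ) (a : V), 0 ≤ n → circ n a one = 0
  truncate : ∀ a b : V, ∃ N : ℕ, ∀ n : ℤ, (N : ℤ) ≤ n → circ n a b = 0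
  comm_even : ∀ {a b : V}, (a ∈ even ∨ b ∈ even) → ∀ (m n : ℤ) (c : V),
    circ m a (circ n b c) - circ n b (circ m a c)
      = ∑ᶠ j : ℕ, zchoose m j • circ (m + n - (j : ℤ)) (circ (j : ℤ) a b) c
  comm_odd : ∀ {a b : V}, a ∈ odd → b ∈ odd → ∀ (m n : ℤ) (c : V),
    circ m a (circ n b c) + circ n b (circ m a c)
      = ∑ᶠ j : ℕ, zchoose m j • circ (m + n - (j : ℤ)) (circ (j : ℤ) a b) c
  iterate_even : ∀ {a b : V}, (a ∈ even ∨ b ∈ even) → ∀ (m n : ℤ) (c : V),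
    circ m (circ n a b) c
      = ∑ᶠ j : ℕ, ((-1 : ℂ) ^ j * zchoose n j) •
          (circ (n - (j : ℤ)) a (circ (m + (j : ℤ)) b c)
            - ((-1 : ℂ) ^ n) • circ (n + m - (j : ℤ)) b (circ (j : ℤ) a c))
  iterate_odd : ∀ {a b : V}, a ∈ odd → b ∈ odd → ∀ (m n : ℤ) (c : V),
    circ m (circ n a b) c
      = ∑ᶠ j : ℕ, ((-1 : ℂ) ^ j * zchoose n j) •
          (circ (n - (j : ℤ)) a (circ (m + (j : ℤ)) b c)
            + ((-1 : ℂ) ^ n) • circ (n + m - (j : ℤ)) b (circ (j : ℤ) a c))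

namespace VA

variable {V : Type} [AddCommGroup V] [Module ℂ V] (A : VA V)

/-- The formal derivative `∂a = a ∘₋₂ 1`. -/
def D (a : V) : V := A.circ (-2) a A.one

/-- The Wick (normally ordered) product `:ab: = a ∘₋₁ b`. -/
def wick (a b : V) : V := A.circ (-1) a b

end VA

namespace VA

/-- Iterated (right-normalized) Wick product of a list of elements. -/
def wlist {V : Type} [AddCommGroup V] [Module ℂ V] (A : VA V) : List V → V
  | [] => A.one
  | a :: l => A.wick a (wlist A l)

/-- Iterated Wick power. -/
def wpow {V : Type} [AddCommGroup V] [Module ℂ V] (A : VA V) (a : V) : ℕ → V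
  | 0 => A.one
  | k + 1 => A.wick a (wpow A a k)

end VA

namespace VA

variable {V : Type} [AddCommGroup V] [Module ℂ V]

/-- The standard monomial `:∂^{n₁}b ⋯ ∂^{nᵢ}b ∂^{m₁}c ⋯ ∂^{mⱼ}c ∂^{s₁}β ⋯ ∂^{sₖ}β ∂^{t₁}γ ⋯ ∂^{tₗ}γ:`. -/
def stdMon (A : VA V) (b c β γ : V) (ns ms ss ts : List ℕ) : V :=
  wlist A ((ns.map fun k => A.D^[k] b) ++ (ms.map fun k => A.D^[k] c)
    ++ (ss.map fun k => A.D^[k] β) ++ (ts.map fun k => A.D^[k] γ))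

/-- The set of all standard monomials. -/
def StdSet (A : VA V) (b c β γ : V) : Set V :=
  {v | ∃ ns ms ss ts : List ℕ,
    List.Chain' (· > ·) ns ∧ List.Chain' (· > ·) ms ∧
    List.Chain' (· ≥ ·) ss ∧ List.Chain' (· ≥ ·) ts ∧
    v = stdMon A b c β γ ns ms ss ts}

/-- The set of standard monomials containing at least one derivative. -/
def DSet (A : VA V) (b c β γ : V) : Set V :=
  {v | ∃ ns ms ss ts : List ℕ,
    List.Chain' (· > ·) ns ∧ List.Chain' (· > ·) ms ∧
    List.Chain' (· ≥ ·) ss ∧ List.Chain' (· ≥ ·) ts ∧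
    (∃ k ∈ ns ++ ms ++ ss ++ ts, 0 < k) ∧
    v = stdMon A b c β γ ns ms ss ts}

end VA
namespace BRST

open Finset in
lemma zchoose_zero_right (m : ℤ) : zchoose m 0 = 1 := by
  simp [zchoose]

lemma zchoose_one_right (m : ℤ) : zchoose m 1 = (m : ℂ) := by
  simp [zchoose]

lemma zchoose_zero_left {j : ℕ} (hj : 1 ≤ j) : zchoose 0 j = 0 := by
  unfold zchoose
  rw [Finset.prod_eq_zero (Finset.mem_range.2 hj : 0 ∈ Finset.range j)]
  · simp
  · simp

lemma zchoose_one_left {j : ℕ} (hj : 2 ≤ j) : zchoose 1 j = 0 := by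
  unfold zchoose
  rw [Finset.prod_eq_zero (Finset.mem_range.2 hj : 1 ∈ Finset.range j)]
  · simp
  · simp

lemma zchoose_one_one : zchoose 1 1 = 1 := by
  simp [zchoose]

lemma prod_neg_one (j : ℕ) :
    (∏ i ∈ Finset.range j, ((-1 : ℂ) - (i : ℂ))) = (-1) ^ j * (Nat.factorial j : ℂ) := by
  induction j with
  | zero => simp
  | succ n ih =>
    rw [Finset.prod_range_succ, ih, pow_succ, Nat.factorial_succ]
    push_cast
    ring

lemma prod_neg_two (j : ℕ) :
    (∏ i ∈ Finset.range j, ((-2 : ℂ) - (i : ℂ))) = (-1) ^ j * (Nat.factorial (j + 1) : ℂ) := by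
  induction j with
  | zero => simp
  | succ n ih =>
    rw [Finset.prod_range_succ, ih, pow_succ, Nat.factorial_succ (n+1)]
    push_cast
    ring

lemma coeff_neg_one (j : ℕ) : ((-1 : ℂ) ^ j * zchoose (-1) j) = 1 := by
  unfold zchoose
  rw [show (((-1 : ℤ) : ℂ)) = -1 by norm_num, prod_neg_one]
  have h : (Nat.factorial j : ℂ) ≠ 0 := by
    exact_mod_cast Nat.factorial_ne_zero j
  field_simp
  rw [← pow_mul, mul_comm, pow_mul]
  norm_num

lemma coeff_neg_two (j : ℕ) : ((-1 : ℂ) ^ j * zchoose (-2) j) = ((j : ℂ) + 1) := by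
  unfold zchoose
  rw [show (((-2 : ℤ) : ℂ)) = -2 by norm_num, prod_neg_two]
  have h : (Nat.factorial j : ℂ) ≠ 0 := by exact_mod_cast Nat.factorial_ne_zero j
  rw [Nat.factorial_succ]
  push_cast
  rw [mul_div_assoc, mul_div_assoc, div_self h, mul_one, ← mul_assoc, ← mul_pow]
  norm_num

lemma finsum_pair {M : Type*} [AddCommMonoid M] (f : ℕ → M) (h : ∀ j, 2 ≤ j → f j = 0) :
    ∑ᶠ j, f j = f 0 + f 1 := by
  have hsub : Function.support f ⊆ (({0, 1} : Finset ℕ) : Set ℕ) := by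
    intro x hx
    simp only [Finset.coe_insert, Finset.coe_singleton, Set.mem_insert_iff,
      Set.mem_singleton_iff]
    by_contra hc
    push_neg at hc
    exact hx (h x (by omega))
  rw [finsum_eq_sum_of_support_subset f hsub]
  rw [show ({0, 1} : Finset ℕ) = insert 0 {1} from rfl,
    Finset.sum_insert (by decide), Finset.sum_singleton]

lemma neg_one_zpow_neg_one : ((-1 : ℂ) ^ (-1 : ℤ)) = -1 := by
  rw [zpow_neg, zpow_one]
  norm_num

lemma neg_one_zpow_neg_two : ((-1 : ℂ) ^ (-2 : ℤ)) = 1 := by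
  rw [zpow_neg]
  norm_num

end BRST
namespace BRST

structure Ctx (V : Type) [AddCommGroup V] [Module ℂ V] where
  A : VA V
  b : V
  c : V
  β : V
  γ : V
  hb : b ∈ A.odd
  hc : c ∈ A.odd
  hβ : β ∈ A.even
  hγ : γ ∈ A.even
  hbc0 : A.circ 0 b c = A.one
  hbc1 : ∀ n : ℤ, 1 ≤ n → A.circ n b c = 0
  hcb0 : A.circ 0 c b = A.one
  hcb1 : ∀ n : ℤ, 1 ≤ n → A.circ n c b = 0
  hbb : ∀ n : ℤ, 0 ≤ n → A.circ n b b = 0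
  hcc : ∀ n : ℤ, 0 ≤ n → A.circ n c c = 0
  hβγ0 : A.circ 0 β γ = A.one
  hβγ1 : ∀ n : ℤ, 1 ≤ n → A.circ n β γ = 0
  hγβ0 : A.circ 0 γ β = -A.one
  hγβ1 : ∀ n : ℤ, 1 ≤ n → A.circ n γ β = 0
  hββ : ∀ n : ℤ, 0 ≤ n → A.circ n β β = 0
  hγγ : ∀ n : ℤ, 0 ≤ n → A.circ n γ γ = 0
  hbβ : ∀ n : ℤ, 0 ≤ n → A.circ n b β = 0
  hbγ : ∀ n : ℤ, 0 ≤ n → A.circ n b γ = 0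
  hcβ : ∀ n : ℤ, 0 ≤ n → A.circ n c β = 0
  hcγ : ∀ n : ℤ, 0 ≤ n → A.circ n c γ = 0
  hβb : ∀ n : ℤ, 0 ≤ n → A.circ n β b = 0
  hγb : ∀ n : ℤ, 0 ≤ n → A.circ n γ b = 0
  hβc : ∀ n : ℤ, 0 ≤ n → A.circ n β c = 0
  hγc : ∀ n : ℤ, 0 ≤ n → A.circ n γ c = 0

namespace Ctx

variable {V : Type} [AddCommGroup V] [Module ℂ V] (S : Ctx V)

noncomputable def LS : V := S.A.wick (S.A.D S.β) S.γ + (2 : ℂ) • S.A.wick S.β (S.A.D S.γ)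
noncomputable def LE : V := -(S.A.wick (S.A.D S.b) S.c) - (2 : ℂ) • S.A.wick S.b (S.A.D S.c)
noncomputable def LW : V := S.LE + S.LS
noncomputable def J : V :=
  S.A.wick (S.LS + (1 / 2 : ℂ) • S.LE) S.c + (3 / 4 : ℂ) • S.A.D (S.A.D S.c)
noncomputable def F : V := S.A.wick S.b S.c
noncomputable def G : V := S.A.wick S.β S.γ
noncomputable def xx : V :=
  S.A.wick S.β (S.A.wick S.γ S.γ) - S.A.wick S.b (S.A.wick S.c S.γ) + (3 / 2 : ℂ) • S.A.D S.γ
noncomputable def NN : V →ₗ[ℂ] V := S.A.circ 0 S.F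
noncomputable def MM : V →ₗ[ℂ] V := S.A.circ 0 S.G
noncomputable def HH : V →ₗ[ℂ] V := S.A.circ 1 S.LW
noncomputable def QQ : V →ₗ[ℂ] V := S.A.circ 0 S.J

lemma D_def (a : V) : S.A.D a = S.A.circ (-2) a S.A.one := rfl

lemma wick_def (a z : V) : S.A.wick a z = S.A.circ (-1) a z := rfl

lemma D_one : S.A.D S.A.one = 0 := by
  rw [S.D_def, S.A.unit_left]
  norm_num

/-- modes of a derivative -/
lemma circ_D (m : ℤ) (a z : V) :
    S.A.circ m (S.A.D a) z = (-(m : ℂ)) • S.A.circ (m - 1) a z := by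
  rw [S.D_def, S.A.iterate_even (Or.inr S.A.one_even) m (-2) z]
  rcases lt_trichotomy m 0 with hm | hm | hm
  · -- m ≤ -1 : single term at j = (-1 - m).toNat
    rw [finsum_eq_single _ (-1 - m).toNat ?_]
    · have hj : ((((-1 : ℤ) - m).toNat : ℤ)) = -1 - m := Int.toNat_of_nonneg (by omega)
      rw [coeff_neg_two, neg_one_zpow_neg_two, S.A.unit_left,
        if_pos (by omega), S.A.unit_left, if_neg (by omega)]
      simp only [map_zero, one_smul, smul_zero, sub_zero]
      rw [show (-2 : ℤ) - ((((-1 : ℤ) - m).toNat : ℤ)) = m - 1 by omega]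
      rw [show (((((-1 : ℤ) - m).toNat : ℕ) : ℂ) + 1) = -(m : ℂ) by
        rw [← Int.cast_natCast (R := ℂ), hj]; push_cast; ring]
    · intro j hj
      rw [S.A.unit_left, if_neg (by omega), S.A.unit_left, if_neg (by omega)]
      simp
  · subst hm
    rw [finsum_eq_zero_of_forall_eq_zero ?_]
    · norm_num
    · intro j
      rw [S.A.unit_left, if_neg (by omega), S.A.unit_left, if_neg (by omega)]
      simp
  · -- 1 ≤ m : single term at j = (m - 1).toNat
    rw [finsum_eq_single _ (m - 1).toNat ?_]
    · have hj : (((m - 1).toNat : ℤ)) = m - 1 := Int.toNat_of_nonneg (by omega)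
      rw [coeff_neg_two, neg_one_zpow_neg_two, S.A.unit_left,
        if_neg (by omega), S.A.unit_left, if_pos (by omega)]
      simp only [map_zero, one_smul, zero_sub, smul_neg]
      rw [show ((((m - 1).toNat : ℕ) : ℂ) + 1) = (m : ℂ) by
        rw [← Int.cast_natCast (R := ℂ), hj]; push_cast; ring, ← neg_smul, hj]
    · intro j hj
      rw [S.A.unit_left, if_neg (by omega), S.A.unit_left, if_neg (by omega)]
      simp

lemma circ_D_zero (a z : V) : S.A.circ 0 (S.A.D a) z = 0 := by
  rw [S.circ_D]
  norm_num

/-- D is a derivation (for arguments of definite parity). -/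
lemma D_leibniz {a z : V}
    (hpar : (a ∈ S.A.even ∨ z ∈ S.A.even) ∨ (a ∈ S.A.odd ∧ z ∈ S.A.odd)) (n : ℤ) :
    S.A.D (S.A.circ n a z) = S.A.circ n (S.A.D a) z + S.A.circ n a (S.A.D z) := by
  have h0 : S.A.circ ((0 : ℕ) : ℤ) a S.A.one = 0 := S.A.unit_right_nonneg _ _ (by norm_num)
  have h1 : S.A.circ ((1 : ℕ) : ℤ) a S.A.one = 0 := S.A.unit_right_nonneg _ _ (by norm_num)
  have hrw : S.A.D (S.A.circ n a z) = S.A.circ (-2) (S.A.circ n a z) S.A.one := S.D_def _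
  rw [hrw]
  rcases hpar with hpar | ⟨ha, hz⟩ <;>
    [rw [S.A.iterate_even hpar (-2) n S.A.one];
     rw [S.A.iterate_odd ha hz (-2) n S.A.one]] <;>
  · rw [finsum_pair _ ?_]
    · rw [h0, h1]
      simp only [map_zero, smul_zero, sub_zero, add_zero, Nat.cast_zero, Nat.cast_one,
        pow_zero, pow_one, zchoose_zero_right, zchoose_one_right, one_mul, neg_one_mul,
        one_smul]
      rw [show ((-2 : ℤ) + 1) = -1 by norm_num, S.A.unit_right_wick, ← S.D_def,
        S.circ_D n a z]
      abel
    · intro j hj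
      rw [S.A.unit_right_nonneg ((j : ℤ)) a (by positivity),
        S.A.unit_right_nonneg ((-2 : ℤ) + (j : ℤ)) z (by omega)]
      simp

end Ctx
end BRST
namespace BRST
namespace Ctx

variable {V : Type} [AddCommGroup V] [Module ℂ V] (S : Ctx V)

/-- zero mode of an even element is a derivation -/
lemma comm0 {F' : V} (hF : F' ∈ S.A.even) (n : ℤ) (a z : V) :
    S.A.circ 0 F' (S.A.circ n a z)
      = S.A.circ n a (S.A.circ 0 F' z) + S.A.circ n (S.A.circ 0 F' a) z := by
  have h := S.A.comm_even (Or.inl hF) 0 n z (a := F') (b := a)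
  rw [finsum_eq_single _ 0 ?_] at h
  · rw [zchoose_zero_right, one_smul, Nat.cast_zero,
      show ((0 : ℤ) + n - 0) = n by ring] at h
    rw [sub_eq_iff_eq_add] at h
    rw [h]
    abel
  · intro j hj
    rw [zchoose_zero_left (Nat.one_le_iff_ne_zero.2 hj), zero_smul]

/-- first mode of an even element : commutator rule -/
lemma comm1 {F' : V} (hF : F' ∈ S.A.even) (n : ℤ) (a z : V) :
    S.A.circ 1 F' (S.A.circ n a z)
      = S.A.circ n a (S.A.circ 1 F' z) + S.A.circ (1 + n) (S.A.circ 0 F' a) z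
        + S.A.circ n (S.A.circ 1 F' a) z := by
  have h := S.A.comm_even (Or.inl hF) 1 n z (a := F') (b := a)
  rw [finsum_pair _ ?_] at h
  · rw [zchoose_zero_right, zchoose_one_one, one_smul, one_smul, Nat.cast_zero,
      Nat.cast_one, show ((1 : ℤ) + n - 0) = 1 + n by ring,
      show ((1 : ℤ) + n - 1) = n by ring] at h
    rw [sub_eq_iff_eq_add] at h
    rw [h]
    abel
  · intro j hj
    rw [zchoose_one_left hj, zero_smul]

/-- mode expansion of a wick product, even left factor case -/
lemma wick_mode_even {a' b' : V} (hpar : a' ∈ S.A.even ∨ b' ∈ S.A.even) (m : ℤ) (g : V) :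
    S.A.circ m (S.A.wick a' b') g
      = ∑ᶠ j : ℕ, (S.A.circ (-1 - (j : ℤ)) a' (S.A.circ (m + (j : ℤ)) b' g)
          + S.A.circ (-1 + m - (j : ℤ)) b' (S.A.circ ((j : ℤ)) a' g)) := by
  rw [S.wick_def, S.A.iterate_even hpar m (-1) g]
  apply finsum_congr
  intro j
  rw [coeff_neg_one j, one_smul, neg_one_zpow_neg_one, neg_smul, one_smul, sub_neg_eq_add]

/-- mode expansion of a wick product, odd-odd case -/
lemma wick_mode_odd {a' b' : V} (ha : a' ∈ S.A.odd) (hb : b' ∈ S.A.odd) (m : ℤ) (g : V) :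
    S.A.circ m (S.A.wick a' b') g
      = ∑ᶠ j : ℕ, (S.A.circ (-1 - (j : ℤ)) a' (S.A.circ (m + (j : ℤ)) b' g)
          - S.A.circ (-1 + m - (j : ℤ)) b' (S.A.circ ((j : ℤ)) a' g)) := by
  rw [S.wick_def, S.A.iterate_odd ha hb m (-1) g]
  apply finsum_congr
  intro j
  rw [coeff_neg_one j, one_smul, neg_one_zpow_neg_one, neg_smul, one_smul, ← sub_eq_add_neg]

end Ctx
end BRST
namespace BRST
namespace Ctx

variable {V : Type} [AddCommGroup V] [Module ℂ V] (S : Ctx V)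

lemma evDβ : S.A.D S.β ∈ S.A.even := S.A.circ_ee _ S.hβ S.A.one_even
lemma evDγ : S.A.D S.γ ∈ S.A.even := S.A.circ_ee _ S.hγ S.A.one_even
lemma odDb : S.A.D S.b ∈ S.A.odd := S.A.circ_oe _ S.hb S.A.one_even
lemma odDc : S.A.D S.c ∈ S.A.odd := S.A.circ_oe _ S.hc S.A.one_even

lemma circ_nonneg_D {X g : V} (h : ∀ n : ℤ, 0 ≤ n → S.A.circ n X g = 0) :
    ∀ n : ℤ, 0 ≤ n → S.A.circ n (S.A.D X) g = 0 := by
  intro n hn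
  rw [S.circ_D]
  rcases eq_or_lt_of_le hn with hn' | hn'
  · rw [← hn']
    norm_num
  · rw [h (n - 1) (by omega), smul_zero]

lemma mode_zero_even {a' b' g : V} (hpar : a' ∈ S.A.even ∨ b' ∈ S.A.even) (m : ℤ)
    (hm : 0 ≤ m)
    (hB : ∀ n : ℤ, 0 ≤ n → S.A.circ n b' g = 0)
    (hA : ∀ n : ℤ, 0 ≤ n → S.A.circ n a' g = 0) :
    S.A.circ m (S.A.wick a' b') g = 0 := by
  rw [S.wick_mode_even hpar m g]
  apply finsum_eq_zero_of_forall_eq_zero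
  intro j
  rw [hB _ (by omega), hA _ (by positivity)]
  simp

lemma mode_zero_odd {a' b' g : V} (ha : a' ∈ S.A.odd) (hb : b' ∈ S.A.odd) (m : ℤ)
    (hm : 0 ≤ m)
    (hB : ∀ n : ℤ, 0 ≤ n → S.A.circ n b' g = 0)
    (hA : ∀ n : ℤ, 0 ≤ n → S.A.circ n a' g = 0) :
    S.A.circ m (S.A.wick a' b') g = 0 := by
  rw [S.wick_mode_odd ha hb m g]
  apply finsum_eq_zero_of_forall_eq_zero
  intro j
  rw [hB _ (by omega), hA _ (by positivity)]
  simp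

/-! W1 = :∂β γ: -/

lemma c0_W1_β : S.A.circ 0 (S.A.wick (S.A.D S.β) S.γ) S.β = -(S.A.D S.β) := by
  rw [S.wick_mode_even (Or.inl S.evDβ) 0 S.β, finsum_eq_single _ 0 ?_]
  · simp only [S.circ_D, Nat.cast_zero]
    norm_num
    rw [S.hγβ0, map_neg, ← S.D_def]
  · intro j hj
    have h1 : (1 : ℤ) ≤ (j : ℤ) := by exact_mod_cast Nat.one_le_iff_ne_zero.2 hj
    simp only [S.circ_D]
    rw [S.hγβ1 (0 + (j : ℤ)) (by omega), S.hββ ((j : ℤ) - 1) (by omega)]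
    simp

lemma c1_W1_β : S.A.circ 1 (S.A.wick (S.A.D S.β) S.γ) S.β = 0 := by
  rw [S.wick_mode_even (Or.inl S.evDβ) 1 S.β]
  apply finsum_eq_zero_of_forall_eq_zero
  intro j
  simp only [S.circ_D]
  rw [S.hγβ1 (1 + (j : ℤ)) (by omega)]
  rcases Nat.eq_zero_or_pos j with hj | hj
  · subst hj
    norm_num
  · have h1 : (1 : ℤ) ≤ (j : ℤ) := by exact_mod_cast hj
    rw [S.hββ ((j : ℤ) - 1) (by omega)]
    simp

lemma c0_W1_γ : S.A.circ 0 (S.A.wick (S.A.D S.β) S.γ) S.γ = -(S.A.D S.γ) := by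
  rw [S.wick_mode_even (Or.inl S.evDβ) 0 S.γ, finsum_eq_single _ 1 ?_]
  · simp only [S.circ_D, Nat.cast_one]
    rw [S.hγγ (0 + (1 : ℤ)) (by norm_num)]
    norm_num
    rw [S.hβγ0, ← S.D_def]
  · intro j hj
    simp only [S.circ_D]
    rw [S.hγγ (0 + (j : ℤ)) (by omega)]
    rcases Nat.eq_zero_or_pos j with hj' | hj'
    · subst hj'
      norm_num
    · have h2 : (2 : ℤ) ≤ (j : ℤ) := by
        have h1 : (1 : ℤ) ≤ (j : ℤ) := by exact_mod_cast hj'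
        rcases eq_or_lt_of_le h1 with he | he
        · exact absurd (by exact_mod_cast he.symm) hj
        · omega
      rw [S.hβγ1 ((j : ℤ) - 1) (by omega)]
      simp

lemma c1_W1_γ : S.A.circ 1 (S.A.wick (S.A.D S.β) S.γ) S.γ = -S.γ := by
  rw [S.wick_mode_even (Or.inl S.evDβ) 1 S.γ, finsum_eq_single _ 1 ?_]
  · simp only [S.circ_D, Nat.cast_one]
    rw [S.hγγ (1 + (1 : ℤ)) (by norm_num)]
    norm_num
    rw [S.hβγ0, S.A.unit_right_wick]
  · intro j hj
    simp only [S.circ_D]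
    rw [S.hγγ (1 + (j : ℤ)) (by omega)]
    rcases Nat.eq_zero_or_pos j with hj' | hj'
    · subst hj'
      norm_num
    · have h2 : (2 : ℤ) ≤ (j : ℤ) := by
        have h1 : (1 : ℤ) ≤ (j : ℤ) := by exact_mod_cast hj'
        rcases eq_or_lt_of_le h1 with he | he
        · exact absurd (by exact_mod_cast he.symm) hj
        · omega
      rw [S.hβγ1 ((j : ℤ) - 1) (by omega)]
      simp

end Ctx
end BRST
namespace BRST
namespace Ctx

variable {V : Type} [AddCommGroup V] [Module ℂ V] (S : Ctx V)

/-! W2 = :β ∂γ: -/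

lemma c0_W2_β : S.A.circ 0 (S.A.wick S.β (S.A.D S.γ)) S.β = S.A.D S.β := by
  rw [S.wick_mode_even (Or.inl S.hβ) 0 S.β, finsum_eq_single _ 1 ?_]
  · simp only [S.circ_D, Nat.cast_one]
    rw [S.hββ ((1 : ℤ)) (by norm_num)]
    norm_num
    rw [S.hγβ0]
    norm_num
    rw [← S.D_def]
  · intro j hj
    simp only [S.circ_D]
    rw [S.hββ ((j : ℤ)) (by omega)]
    rcases Nat.eq_zero_or_pos j with hj' | hj'
    · subst hj'
      norm_num
    · have h2 : (2 : ℤ) ≤ (j : ℤ) := by omega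
      rw [S.hγβ1 (0 + (j : ℤ) - 1) (by omega)]
      simp

lemma c1_W2_β : S.A.circ 1 (S.A.wick S.β (S.A.D S.γ)) S.β = S.β := by
  rw [S.wick_mode_even (Or.inl S.hβ) 1 S.β, finsum_eq_single _ 0 ?_]
  · simp only [S.circ_D, Nat.cast_zero]
    rw [S.hββ ((0 : ℤ)) le_rfl]
    norm_num
    rw [S.hγβ0]
    norm_num
    rw [S.A.unit_right_wick]
  · intro j hj
    have h1 : (1 : ℤ) ≤ (j : ℤ) := by omega
    simp only [S.circ_D]
    rw [S.hββ ((j : ℤ)) (by omega), S.hγβ1 (1 + (j : ℤ) - 1) (by omega)]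
    simp

lemma c0_W2_γ : S.A.circ 0 (S.A.wick S.β (S.A.D S.γ)) S.γ = S.A.D S.γ := by
  rw [S.wick_mode_even (Or.inl S.hβ) 0 S.γ, finsum_eq_single _ 0 ?_]
  · simp only [S.circ_D, Nat.cast_zero]
    norm_num
    rw [S.hβγ0, ← S.D_def]
  · intro j hj
    have h1 : (1 : ℤ) ≤ (j : ℤ) := by omega
    simp only [S.circ_D]
    rw [S.hγγ (0 + (j : ℤ) - 1) (by omega), S.hβγ1 ((j : ℤ)) (by omega)]
    simp

lemma c1_W2_γ : S.A.circ 1 (S.A.wick S.β (S.A.D S.γ)) S.γ = 0 := by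
  rw [S.wick_mode_even (Or.inl S.hβ) 1 S.γ]
  apply finsum_eq_zero_of_forall_eq_zero
  intro j
  simp only [S.circ_D]
  rw [S.hγγ (1 + (j : ℤ) - 1) (by omega)]
  rcases Nat.eq_zero_or_pos j with hj' | hj'
  · subst hj'
    norm_num
  · have h1 : (1 : ℤ) ≤ (j : ℤ) := by omega
    rw [S.hβγ1 ((j : ℤ)) (by omega)]
    simp

/-! W3 = :∂b c: -/

lemma c0_W3_b : S.A.circ 0 (S.A.wick (S.A.D S.b) S.c) S.b = S.A.D S.b := by
  rw [S.wick_mode_odd S.odDb S.hc 0 S.b, finsum_eq_single _ 0 ?_]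
  · simp only [S.circ_D, Nat.cast_zero]
    norm_num
    rw [S.hcb0, ← S.D_def]
  · intro j hj
    have h1 : (1 : ℤ) ≤ (j : ℤ) := by omega
    simp only [S.circ_D]
    rw [S.hcb1 (0 + (j : ℤ)) (by omega), S.hbb ((j : ℤ) - 1) (by omega)]
    simp

lemma c1_W3_b : S.A.circ 1 (S.A.wick (S.A.D S.b) S.c) S.b = 0 := by
  rw [S.wick_mode_odd S.odDb S.hc 1 S.b]
  apply finsum_eq_zero_of_forall_eq_zero
  intro j
  simp only [S.circ_D]
  rw [S.hcb1 (1 + (j : ℤ)) (by omega)]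
  rcases Nat.eq_zero_or_pos j with hj' | hj'
  · subst hj'
    norm_num
  · have h1 : (1 : ℤ) ≤ (j : ℤ) := by omega
    rw [S.hbb ((j : ℤ) - 1) (by omega)]
    simp

lemma c0_W3_c : S.A.circ 0 (S.A.wick (S.A.D S.b) S.c) S.c = S.A.D S.c := by
  rw [S.wick_mode_odd S.odDb S.hc 0 S.c, finsum_eq_single _ 1 ?_]
  · simp only [S.circ_D, Nat.cast_one]
    rw [S.hcc (0 + (1 : ℤ)) (by norm_num)]
    norm_num
    rw [S.hbc0]
    norm_num
    rw [← S.D_def]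
  · intro j hj
    simp only [S.circ_D]
    rw [S.hcc (0 + (j : ℤ)) (by omega)]
    rcases Nat.eq_zero_or_pos j with hj' | hj'
    · subst hj'
      norm_num
    · have h2 : (2 : ℤ) ≤ (j : ℤ) := by omega
      rw [S.hbc1 ((j : ℤ) - 1) (by omega)]
      simp

lemma c1_W3_c : S.A.circ 1 (S.A.wick (S.A.D S.b) S.c) S.c = S.c := by
  rw [S.wick_mode_odd S.odDb S.hc 1 S.c, finsum_eq_single _ 1 ?_]
  · simp only [S.circ_D, Nat.cast_one]
    rw [S.hcc (1 + (1 : ℤ)) (by norm_num)]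
    norm_num
    rw [S.hbc0]
    norm_num
    rw [S.A.unit_right_wick]
  · intro j hj
    simp only [S.circ_D]
    rw [S.hcc (1 + (j : ℤ)) (by omega)]
    rcases Nat.eq_zero_or_pos j with hj' | hj'
    · subst hj'
      norm_num
    · have h2 : (2 : ℤ) ≤ (j : ℤ) := by omega
      rw [S.hbc1 ((j : ℤ) - 1) (by omega)]
      simp

/-! W4 = :b ∂c: -/

lemma c0_W4_b : S.A.circ 0 (S.A.wick S.b (S.A.D S.c)) S.b = -(S.A.D S.b) := by
  rw [S.wick_mode_odd S.hb S.odDc 0 S.b, finsum_eq_single _ 1 ?_]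
  · simp only [S.circ_D, Nat.cast_one]
    rw [S.hbb ((1 : ℤ)) (by norm_num)]
    norm_num
    rw [S.hcb0]
    norm_num
    rw [← S.D_def]
  · intro j hj
    simp only [S.circ_D]
    rw [S.hbb ((j : ℤ)) (by omega)]
    rcases Nat.eq_zero_or_pos j with hj' | hj'
    · subst hj'
      norm_num
    · have h2 : (2 : ℤ) ≤ (j : ℤ) := by omega
      rw [S.hcb1 (0 + (j : ℤ) - 1) (by omega)]
      simp

lemma c1_W4_b : S.A.circ 1 (S.A.wick S.b (S.A.D S.c)) S.b = -S.b := by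
  rw [S.wick_mode_odd S.hb S.odDc 1 S.b, finsum_eq_single _ 0 ?_]
  · simp only [S.circ_D, Nat.cast_zero]
    rw [S.hbb ((0 : ℤ)) le_rfl]
    norm_num
    rw [S.hcb0]
    norm_num
    rw [S.A.unit_right_wick]
  · intro j hj
    have h1 : (1 : ℤ) ≤ (j : ℤ) := by omega
    simp only [S.circ_D]
    rw [S.hbb ((j : ℤ)) (by omega), S.hcb1 (1 + (j : ℤ) - 1) (by omega)]
    simp

lemma c0_W4_c : S.A.circ 0 (S.A.wick S.b (S.A.D S.c)) S.c = -(S.A.D S.c) := by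
  rw [S.wick_mode_odd S.hb S.odDc 0 S.c, finsum_eq_single _ 0 ?_]
  · simp only [S.circ_D, Nat.cast_zero]
    norm_num
    rw [S.hbc0, ← S.D_def]
  · intro j hj
    have h1 : (1 : ℤ) ≤ (j : ℤ) := by omega
    simp only [S.circ_D]
    rw [S.hcc (0 + (j : ℤ) - 1) (by omega), S.hbc1 ((j : ℤ)) (by omega)]
    simp

lemma c1_W4_c : S.A.circ 1 (S.A.wick S.b (S.A.D S.c)) S.c = 0 := by
  rw [S.wick_mode_odd S.hb S.odDc 1 S.c]
  apply finsum_eq_zero_of_forall_eq_zero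
  intro j
  simp only [S.circ_D]
  rw [S.hcc (1 + (j : ℤ) - 1) (by omega)]
  rcases Nat.eq_zero_or_pos j with hj' | hj'
  · subst hj'
    norm_num
  · have h1 : (1 : ℤ) ≤ (j : ℤ) := by omega
    rw [S.hbc1 ((j : ℤ)) (by omega)]
    simp

/-! F = :bc: and G = :βγ: zero modes -/

lemma c0_F_b : S.A.circ 0 S.F S.b = S.b := by
  rw [show S.F = S.A.wick S.b S.c from rfl,
    S.wick_mode_odd S.hb S.hc 0 S.b, finsum_eq_single _ 0 ?_]
  · rw [Nat.cast_zero, S.hbb ((0 : ℤ)) le_rfl]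
    norm_num
    rw [S.hcb0]
    norm_num
    rw [S.A.unit_right_wick]
  · intro j hj
    have h1 : (1 : ℤ) ≤ (j : ℤ) := by omega
    rw [S.hcb1 (0 + (j : ℤ)) (by omega), S.hbb ((j : ℤ)) (by omega)]
    simp

lemma c0_F_c : S.A.circ 0 S.F S.c = -S.c := by
  rw [show S.F = S.A.wick S.b S.c from rfl,
    S.wick_mode_odd S.hb S.hc 0 S.c, finsum_eq_single _ 0 ?_]
  · rw [Nat.cast_zero, S.hcc (0 + (0 : ℤ)) (by norm_num)]
    norm_num
    rw [S.hbc0]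
    norm_num
    rw [S.A.unit_right_wick]
  · intro j hj
    have h1 : (1 : ℤ) ≤ (j : ℤ) := by omega
    rw [S.hcc (0 + (j : ℤ)) (by omega), S.hbc1 ((j : ℤ)) (by omega)]
    simp

lemma c0_G_β : S.A.circ 0 S.G S.β = -S.β := by
  rw [show S.G = S.A.wick S.β S.γ from rfl,
    S.wick_mode_even (Or.inl S.hβ) 0 S.β, finsum_eq_single _ 0 ?_]
  · rw [Nat.cast_zero, S.hββ ((0 : ℤ)) le_rfl]
    norm_num
    rw [S.hγβ0]
    norm_num
    rw [S.A.unit_right_wick]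
  · intro j hj
    have h1 : (1 : ℤ) ≤ (j : ℤ) := by omega
    rw [S.hγβ1 (0 + (j : ℤ)) (by omega), S.hββ ((j : ℤ)) (by omega)]
    simp

lemma c0_G_γ : S.A.circ 0 S.G S.γ = S.γ := by
  rw [show S.G = S.A.wick S.β S.γ from rfl,
    S.wick_mode_even (Or.inl S.hβ) 0 S.γ, finsum_eq_single _ 0 ?_]
  · rw [Nat.cast_zero, S.hγγ (0 + (0 : ℤ)) (by norm_num)]
    norm_num
    rw [S.hβγ0]
    norm_num
    rw [S.A.unit_right_wick]
  · intro j hj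
    have h1 : (1 : ℤ) ≤ (j : ℤ) := by omega
    rw [S.hγγ (0 + (j : ℤ)) (by omega), S.hβγ1 ((j : ℤ)) (by omega)]
    simp

end Ctx
end BRST
namespace BRST
namespace Ctx

variable {V : Type} [AddCommGroup V] [Module ℂ V] (S : Ctx V)

lemma circ_add_left (n : ℤ) (a a' z : V) :
    S.A.circ n (a + a') z = S.A.circ n a z + S.A.circ n a' z := by
  rw [map_add, LinearMap.add_apply]

lemma circ_smul_left (n : ℤ) (t : ℂ) (a z : V) :
    S.A.circ n (t • a) z = t • S.A.circ n a z := by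
  rw [map_smul, LinearMap.smul_apply]

lemma circ_neg_left (n : ℤ) (a z : V) :
    S.A.circ n (-a) z = -(S.A.circ n a z) := by
  rw [map_neg, LinearMap.neg_apply]

lemma circ_sub_left (n : ℤ) (a a' z : V) :
    S.A.circ n (a - a') z = S.A.circ n a z - S.A.circ n a' z := by
  rw [map_sub, LinearMap.sub_apply]

lemma LS_def : S.LS = S.A.wick (S.A.D S.β) S.γ + (2 : ℂ) • S.A.wick S.β (S.A.D S.γ) := rfl
lemma LE_def : S.LE = -(S.A.wick (S.A.D S.b) S.c) - (2 : ℂ) • S.A.wick S.b (S.A.D S.c) := rfl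
lemma LW_def : S.LW = S.LE + S.LS := rfl

/-! cross vanishing -/

lemma circ_LS_b (m : ℤ) (hm : 0 ≤ m) : S.A.circ m S.LS S.b = 0 := by
  rw [S.LS_def, S.circ_add_left, S.circ_smul_left,
    S.mode_zero_even (Or.inl S.evDβ) m hm S.hγb (S.circ_nonneg_D S.hβb),
    S.mode_zero_even (Or.inl S.hβ) m hm (S.circ_nonneg_D S.hγb) S.hβb]
  simp

lemma circ_LS_c (m : ℤ) (hm : 0 ≤ m) : S.A.circ m S.LS S.c = 0 := by
  rw [S.LS_def, S.circ_add_left, S.circ_smul_left,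
    S.mode_zero_even (Or.inl S.evDβ) m hm S.hγc (S.circ_nonneg_D S.hβc),
    S.mode_zero_even (Or.inl S.hβ) m hm (S.circ_nonneg_D S.hγc) S.hβc]
  simp

lemma circ_LE_β (m : ℤ) (hm : 0 ≤ m) : S.A.circ m S.LE S.β = 0 := by
  rw [S.LE_def, S.circ_sub_left, S.circ_neg_left, S.circ_smul_left,
    S.mode_zero_odd S.odDb S.hc m hm S.hcβ (S.circ_nonneg_D S.hbβ),
    S.mode_zero_odd S.hb S.odDc m hm (S.circ_nonneg_D S.hcβ) S.hbβ]
  simp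

lemma circ_LE_γ (m : ℤ) (hm : 0 ≤ m) : S.A.circ m S.LE S.γ = 0 := by
  rw [S.LE_def, S.circ_sub_left, S.circ_neg_left, S.circ_smul_left,
    S.mode_zero_odd S.odDb S.hc m hm S.hcγ (S.circ_nonneg_D S.hbγ),
    S.mode_zero_odd S.hb S.odDc m hm (S.circ_nonneg_D S.hcγ) S.hbγ]
  simp

lemma c0_F_β : S.A.circ 0 S.F S.β = 0 :=
  S.mode_zero_odd S.hb S.hc 0 le_rfl S.hcβ S.hbβ
lemma c0_F_γ : S.A.circ 0 S.F S.γ = 0 :=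
  S.mode_zero_odd S.hb S.hc 0 le_rfl S.hcγ S.hbγ
lemma c0_G_b : S.A.circ 0 S.G S.b = 0 :=
  S.mode_zero_even (Or.inl S.hβ) 0 le_rfl S.hγb S.hβb
lemma c0_G_c : S.A.circ 0 S.G S.c = 0 :=
  S.mode_zero_even (Or.inl S.hβ) 0 le_rfl S.hγc S.hβc

/-! LW modes on the generators -/

lemma c0_LS_β : S.A.circ 0 S.LS S.β = S.A.D S.β := by
  rw [S.LS_def, S.circ_add_left, S.circ_smul_left, S.c0_W1_β, S.c0_W2_β]
  module

lemma c1_LS_β : S.A.circ 1 S.LS S.β = (2 : ℂ) • S.β := by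
  rw [S.LS_def, S.circ_add_left, S.circ_smul_left, S.c1_W1_β, S.c1_W2_β]
  module

lemma c0_LS_γ : S.A.circ 0 S.LS S.γ = S.A.D S.γ := by
  rw [S.LS_def, S.circ_add_left, S.circ_smul_left, S.c0_W1_γ, S.c0_W2_γ]
  module

lemma c1_LS_γ : S.A.circ 1 S.LS S.γ = -S.γ := by
  rw [S.LS_def, S.circ_add_left, S.circ_smul_left, S.c1_W1_γ, S.c1_W2_γ]
  module

lemma c0_LE_b : S.A.circ 0 S.LE S.b = S.A.D S.b := by
  rw [S.LE_def, S.circ_sub_left, S.circ_neg_left, S.circ_smul_left, S.c0_W3_b, S.c0_W4_b]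
  module

lemma c1_LE_b : S.A.circ 1 S.LE S.b = (2 : ℂ) • S.b := by
  rw [S.LE_def, S.circ_sub_left, S.circ_neg_left, S.circ_smul_left, S.c1_W3_b, S.c1_W4_b]
  module

lemma c0_LE_c : S.A.circ 0 S.LE S.c = S.A.D S.c := by
  rw [S.LE_def, S.circ_sub_left, S.circ_neg_left, S.circ_smul_left, S.c0_W3_c, S.c0_W4_c]
  module

lemma c1_LE_c : S.A.circ 1 S.LE S.c = -S.c := by
  rw [S.LE_def, S.circ_sub_left, S.circ_neg_left, S.circ_smul_left, S.c1_W3_c, S.c1_W4_c]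
  module

lemma c0_LW_b : S.A.circ 0 S.LW S.b = S.A.D S.b := by
  rw [S.LW_def, S.circ_add_left, S.c0_LE_b, S.circ_LS_b 0 le_rfl, add_zero]
lemma c0_LW_c : S.A.circ 0 S.LW S.c = S.A.D S.c := by
  rw [S.LW_def, S.circ_add_left, S.c0_LE_c, S.circ_LS_c 0 le_rfl, add_zero]
lemma c0_LW_β : S.A.circ 0 S.LW S.β = S.A.D S.β := by
  rw [S.LW_def, S.circ_add_left, S.c0_LS_β, S.circ_LE_β 0 le_rfl, zero_add]
lemma c0_LW_γ : S.A.circ 0 S.LW S.γ = S.A.D S.γ := by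
  rw [S.LW_def, S.circ_add_left, S.c0_LS_γ, S.circ_LE_γ 0 le_rfl, zero_add]

lemma c1_LW_b : S.A.circ 1 S.LW S.b = (2 : ℂ) • S.b := by
  rw [S.LW_def, S.circ_add_left, S.c1_LE_b, S.circ_LS_b 1 (by norm_num), add_zero]
lemma c1_LW_c : S.A.circ 1 S.LW S.c = -S.c := by
  rw [S.LW_def, S.circ_add_left, S.c1_LE_c, S.circ_LS_c 1 (by norm_num), add_zero]
lemma c1_LW_β : S.A.circ 1 S.LW S.β = (2 : ℂ) • S.β := by
  rw [S.LW_def, S.circ_add_left, S.c1_LS_β, S.circ_LE_β 1 (by norm_num), zero_add]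
lemma c1_LW_γ : S.A.circ 1 S.LW S.γ = -S.γ := by
  rw [S.LW_def, S.circ_add_left, S.c1_LS_γ, S.circ_LE_γ 1 (by norm_num), zero_add]

lemma F_even : S.F ∈ S.A.even := S.A.circ_oo _ S.hb S.hc
lemma G_even : S.G ∈ S.A.even := S.A.circ_ee _ S.hβ S.hγ
lemma LS_even : S.LS ∈ S.A.even := by
  rw [S.LS_def]
  exact Submodule.add_mem _ (S.A.circ_ee _ S.evDβ S.hγ)
    (Submodule.smul_mem _ _ (S.A.circ_ee _ S.hβ S.evDγ))
lemma LE_even : S.LE ∈ S.A.even := by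
  rw [S.LE_def]
  exact Submodule.sub_mem _ (Submodule.neg_mem _ (S.A.circ_oo _ S.odDb S.hc))
    (Submodule.smul_mem _ _ (S.A.circ_oo _ S.hb S.odDc))
lemma LW_even : S.LW ∈ S.A.even := Submodule.add_mem _ S.LE_even S.LS_even

end Ctx
end BRST
namespace BRST
namespace Ctx

variable {V : Type} [AddCommGroup V] [Module ℂ V] (S : Ctx V)

def Par (e : Bool) (a : V) : Prop := cond e (a ∈ S.A.even) (a ∈ S.A.odd)

/-- simultaneous eigenvector data, with parity and compatibility with `D`. -/
def Eig (e : Bool) (a : V) (p q r : ℤ) : Prop :=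
  S.Par e a ∧ S.A.circ 0 S.LW a = S.A.D a ∧
    S.NN a = ((p : ℂ)) • a ∧ S.MM a = ((q : ℂ)) • a ∧ S.HH a = ((r : ℂ)) • a

lemma NN_apply (a : V) : S.NN a = S.A.circ 0 S.F a := rfl
lemma MM_apply (a : V) : S.MM a = S.A.circ 0 S.G a := rfl
lemma HH_apply (a : V) : S.HH a = S.A.circ 1 S.LW a := rfl

lemma NN_one : S.NN S.A.one = 0 := S.A.unit_right_nonneg 0 _ le_rfl
lemma MM_one : S.MM S.A.one = 0 := S.A.unit_right_nonneg 0 _ le_rfl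
lemma HH_one : S.HH S.A.one = 0 := S.A.unit_right_nonneg 1 _ (by norm_num)
lemma c0LW_one : S.A.circ 0 S.LW S.A.one = S.A.D S.A.one := by
  rw [S.A.unit_right_nonneg 0 _ le_rfl, S.D_one]

lemma D_smul (t : ℂ) (a : V) : S.A.D (t • a) = t • S.A.D a := by
  rw [S.D_def, S.D_def, S.circ_smul_left]

lemma D_add (a a' : V) : S.A.D (a + a') = S.A.D a + S.A.D a' := by
  rw [S.D_def, S.D_def, S.D_def, S.circ_add_left]

lemma eig_one : S.Eig true S.A.one 0 0 0 := by
  refine ⟨S.A.one_even, S.c0LW_one, ?_, ?_, ?_⟩ <;>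
    simp [S.NN_one, S.MM_one, S.HH_one]

lemma eig_smul {e : Bool} {a : V} {p q r : ℤ} (t : ℂ) (h : S.Eig e a p q r) :
    S.Eig e (t • a) p q r := by
  obtain ⟨hp, hD, hN, hM, hH⟩ := h
  refine ⟨?_, ?_, ?_, ?_, ?_⟩
  · cases e <;> exact Submodule.smul_mem _ _ hp
  · rw [map_smul, hD, S.D_smul]
  · rw [map_smul, hN, smul_comm]
  · rw [map_smul, hM, smul_comm]
  · rw [map_smul, hH, smul_comm]

lemma eig_neg {e : Bool} {a : V} {p q r : ℤ} (h : S.Eig e a p q r) :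
    S.Eig e (-a) p q r := by
  have := S.eig_smul (-1 : ℂ) h
  simpa using this

lemma eig_add {e : Bool} {a a' : V} {p q r : ℤ}
    (h : S.Eig e a p q r) (h' : S.Eig e a' p q r) : S.Eig e (a + a') p q r := by
  obtain ⟨hp, hD, hN, hM, hH⟩ := h
  obtain ⟨hp', hD', hN', hM', hH'⟩ := h'
  refine ⟨?_, ?_, ?_, ?_, ?_⟩
  · cases e <;> exact Submodule.add_mem _ hp hp'
  · rw [map_add, hD, hD', S.D_add]
  · rw [map_add, hN, hN', smul_add]
  · rw [map_add, hM, hM', smul_add]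
  · rw [map_add, hH, hH', smul_add]

lemma eig_sub {e : Bool} {a a' : V} {p q r : ℤ}
    (h : S.Eig e a p q r) (h' : S.Eig e a' p q r) : S.Eig e (a - a') p q r := by
  have := S.eig_add h (S.eig_neg h')
  simpa [sub_eq_add_neg] using this

lemma eig_D {e : Bool} {a : V} {p q r : ℤ} (h : S.Eig e a p q r) :
    S.Eig e (S.A.D a) p q (r + 1) := by
  obtain ⟨hp, hD, hN, hM, hH⟩ := h
  have hDdef : S.A.D a = S.A.circ (-2) a S.A.one := S.D_def a
  refine ⟨?_, ?_, ?_, ?_, ?_⟩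
  · cases e
    · exact S.A.circ_oe _ hp S.A.one_even
    · exact S.A.circ_ee _ hp S.A.one_even
  · rw [hDdef, S.comm0 S.LW_even, S.c0LW_one, S.D_one, map_zero, zero_add, hD, ← hDdef,
      ← S.D_def]
  · rw [hDdef, S.NN_apply, S.comm0 S.F_even, ← S.NN_apply, ← S.NN_apply, S.NN_one,
      map_zero, zero_add, hN, map_smul, LinearMap.smul_apply, ← hDdef]
  · rw [hDdef, S.MM_apply, S.comm0 S.G_even, ← S.MM_apply, ← S.MM_apply, S.MM_one,
      map_zero, zero_add, hM, map_smul, LinearMap.smul_apply, ← hDdef]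
  · rw [hDdef, S.HH_apply, S.comm1 S.LW_even, ← S.HH_apply, ← S.HH_apply, S.HH_one,
      map_zero, zero_add, hH, hD]
    rw [show ((1 : ℤ) + -2) = -1 by norm_num, S.A.unit_right_wick, map_smul,
      LinearMap.smul_apply, ← hDdef]
    push_cast
    module

lemma eig_wick {e e' : Bool} {a z : V} {p q r p' q' r' : ℤ}
    (h : S.Eig e a p q r) (h' : S.Eig e' z p' q' r') :
    S.Eig (e == e') (S.A.wick a z) (p + p') (q + q') (r + r') := by
  obtain ⟨hp, hD, hN, hM, hH⟩ := h
  obtain ⟨hp', hD', hN', hM', hH'⟩ := h'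
  have hwdef : S.A.wick a z = S.A.circ (-1) a z := S.wick_def a z
  refine ⟨?_, ?_, ?_, ?_, ?_⟩
  · cases e <;> cases e'
    · exact S.A.circ_oo _ hp hp'
    · exact S.A.circ_oe _ hp hp'
    · exact S.A.circ_eo _ hp hp'
    · exact S.A.circ_ee _ hp hp'
  · have hpar : (a ∈ S.A.even ∨ z ∈ S.A.even) ∨ (a ∈ S.A.odd ∧ z ∈ S.A.odd) := by
      cases e <;> cases e'
      · exact Or.inr ⟨hp, hp'⟩
      · exact Or.inl (Or.inr hp')
      · exact Or.inl (Or.inl hp)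
      · exact Or.inl (Or.inl hp)
    rw [hwdef, S.comm0 S.LW_even, hD, hD', S.D_leibniz hpar]
    abel
  · rw [hwdef, S.NN_apply, S.comm0 S.F_even, ← S.NN_apply, ← S.NN_apply, hN, hN',
      map_smul, map_smul, LinearMap.smul_apply]
    push_cast
    module
  · rw [hwdef, S.MM_apply, S.comm0 S.G_even, ← S.MM_apply, ← S.MM_apply, hM, hM',
      map_smul, map_smul, LinearMap.smul_apply]
    push_cast
    module
  · rw [hwdef, S.HH_apply, S.comm1 S.LW_even, ← S.HH_apply, ← S.HH_apply, hH, hH', hD]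
    rw [show ((1 : ℤ) + -1) = 0 by norm_num, S.circ_D_zero, map_smul, map_smul,
      LinearMap.smul_apply]
    push_cast
    module

lemma eig_b : S.Eig false S.b 1 0 2 := by
  refine ⟨S.hb, S.c0_LW_b, ?_, ?_, ?_⟩
  · rw [S.NN_apply, S.c0_F_b]
    norm_num
  · rw [S.MM_apply, S.c0_G_b]
    norm_num
  · rw [S.HH_apply, S.c1_LW_b]
    norm_num

lemma eig_c : S.Eig false S.c (-1) 0 (-1) := by
  refine ⟨S.hc, S.c0_LW_c, ?_, ?_, ?_⟩
  · rw [S.NN_apply, S.c0_F_c]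
    norm_num
  · rw [S.MM_apply, S.c0_G_c]
    norm_num
  · rw [S.HH_apply, S.c1_LW_c]
    norm_num

lemma eig_β : S.Eig true S.β 0 (-1) 2 := by
  refine ⟨S.hβ, S.c0_LW_β, ?_, ?_, ?_⟩
  · rw [S.NN_apply, S.c0_F_β]
    norm_num
  · rw [S.MM_apply, S.c0_G_β]
    norm_num
  · rw [S.HH_apply, S.c1_LW_β]
    norm_num

lemma eig_γ : S.Eig true S.γ 0 1 (-1) := by
  refine ⟨S.hγ, S.c0_LW_γ, ?_, ?_, ?_⟩
  · rw [S.NN_apply, S.c0_F_γ]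
    norm_num
  · rw [S.MM_apply, S.c0_G_γ]
    norm_num
  · rw [S.HH_apply, S.c1_LW_γ]
    norm_num

lemma eig_LS : S.Eig true S.LS 0 0 2 := by
  rw [S.LS_def]
  exact S.eig_add (S.eig_wick (S.eig_D S.eig_β) S.eig_γ)
    (S.eig_smul 2 (S.eig_wick S.eig_β (S.eig_D S.eig_γ)))

lemma eig_LE : S.Eig true S.LE 0 0 2 := by
  rw [S.LE_def]
  exact S.eig_sub (S.eig_neg (S.eig_wick (S.eig_D S.eig_b) S.eig_c))
    (S.eig_smul 2 (S.eig_wick S.eig_b (S.eig_D S.eig_c)))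

lemma eig_J : S.Eig false S.J (-1) 0 1 := by
  rw [show S.J = S.A.wick (S.LS + (1 / 2 : ℂ) • S.LE) S.c
      + (3 / 4 : ℂ) • S.A.D (S.A.D S.c) from rfl]
  exact S.eig_add
    (S.eig_wick (S.eig_add S.eig_LS (S.eig_smul _ S.eig_LE)) S.eig_c)
    (S.eig_smul _ (S.eig_D (S.eig_D S.eig_c)))

/-- weak (purely spectral) eigendata -/
def SEig (a : V) (t : ℤ × ℤ × ℤ) : Prop :=
  S.NN a = ((t.1 : ℂ)) • a ∧ S.MM a = ((t.2.1 : ℂ)) • a ∧ S.HH a = ((t.2.2 : ℂ)) • a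

lemma Eig.toSEig {e : Bool} {a : V} {p q r : ℤ} (h : S.Eig e a p q r) :
    S.SEig a (p, q, r) := ⟨h.2.2.1, h.2.2.2.1, h.2.2.2.2⟩

lemma seig_smul {a : V} {t : ℤ × ℤ × ℤ} (s : ℂ) (h : S.SEig a t) : S.SEig (s • a) t := by
  obtain ⟨hN, hM, hH⟩ := h
  exact ⟨by rw [map_smul, hN, smul_comm], by rw [map_smul, hM, smul_comm],
    by rw [map_smul, hH, smul_comm]⟩

lemma seig_add {a a' : V} {t : ℤ × ℤ × ℤ} (h : S.SEig a t) (h' : S.SEig a' t) :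
    S.SEig (a + a') t := by
  obtain ⟨hN, hM, hH⟩ := h
  obtain ⟨hN', hM', hH'⟩ := h'
  exact ⟨by rw [map_add, hN, hN', smul_add], by rw [map_add, hM, hM', smul_add],
    by rw [map_add, hH, hH', smul_add]⟩

lemma seig_sub {a a' : V} {t : ℤ × ℤ × ℤ} (h : S.SEig a t) (h' : S.SEig a' t) :
    S.SEig (a - a') t := by
  have := S.seig_add h (by simpa using S.seig_smul (-1 : ℂ) h')
  simpa [sub_eq_add_neg] using this

/-- the BRST operator shifts the `N`-charge down by one and preserves M, H. -/
lemma seig_Q {a : V} {t : ℤ × ℤ × ℤ} (h : S.SEig a t) :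
    S.SEig (S.QQ a) (t.1 - 1, t.2.1, t.2.2) := by
  obtain ⟨hN, hM, hH⟩ := h
  have hNJ : S.NN S.J = -S.J := by
    rw [S.eig_J.2.2.1]
    norm_num
  have hMJ : S.MM S.J = 0 := by
    rw [S.eig_J.2.2.2.1]
    norm_num
  have hHJ : S.HH S.J = S.J := by
    rw [S.eig_J.2.2.2.2]
    norm_num
  have hDJ : S.A.circ 0 S.LW S.J = S.A.D S.J := S.eig_J.2.1
  refine ⟨?_, ?_, ?_⟩
  · have := S.comm0 S.F_even 0 S.J a
    rw [← S.NN_apply, ← S.NN_apply, ← S.NN_apply] at this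
    rw [show S.QQ a = S.A.circ 0 S.J a from rfl, this, hN, hNJ, map_neg,
      LinearMap.neg_apply, map_smul]
    push_cast
    module
  · have := S.comm0 S.G_even 0 S.J a
    rw [← S.MM_apply, ← S.MM_apply, ← S.MM_apply] at this
    rw [show S.QQ a = S.A.circ 0 S.J a from rfl, this, hM, hMJ, map_zero,
      LinearMap.zero_apply, map_smul]
    push_cast
    module
  · have := S.comm1 S.LW_even 0 S.J a
    rw [← S.HH_apply, ← S.HH_apply, ← S.HH_apply] at this
    rw [show S.QQ a = S.A.circ 0 S.J a from rfl, this, hH, hHJ, hDJ,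
      show ((1 : ℤ) + 0) = 1 by norm_num, S.circ_D, map_smul]
    push_cast
    module

end Ctx
end BRST
namespace BRST
namespace Ctx

variable {V : Type} [AddCommGroup V] [Module ℂ V] (S : Ctx V)

lemma eig_iterD {e : Bool} {a : V} {p q r : ℤ} (k : ℕ) (h : S.Eig e a p q r) :
    S.Eig e (S.A.D^[k] a) p q (r + k) := by
  induction k with
  | zero => simpa using h
  | succ n ih =>
    rw [Function.iterate_succ_apply',
      show (r + ((n + 1 : ℕ) : ℤ)) = (r + (n : ℕ)) + 1 by push_cast; ring]
    exact S.eig_D ih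

lemma eig_chain {g : V} {eg : Bool} {p q r : ℤ} (hg : S.Eig eg g p q r) :
    ∀ (ks : List ℕ) {e' : Bool} {P Q R : ℤ} {rest : List V},
      S.Eig e' (VA.wlist S.A rest) P Q R →
      ∃ e'', S.Eig e'' (VA.wlist S.A ((ks.map fun k => S.A.D^[k] g) ++ rest))
        (p * ks.length + P) (q * ks.length + Q)
        (r * ks.length + (ks.sum : ℤ) + R) := by
  intro ks
  induction ks with
  | nil =>
    intro e' P Q R rest h
    exact ⟨e', by simpa using h⟩
  | cons k ks ih =>
    intro e' P Q R rest h
    obtain ⟨e'', h2⟩ := ih h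
    have h3 := S.eig_wick (S.eig_iterD k hg) h2
    refine ⟨(eg == e''), ?_⟩
    rw [show (p * (((k :: ks).length : ℕ) : ℤ) + P)
          = p + (p * (ks.length : ℕ) + P) by simp only [List.length_cons, List.sum_cons, Nat.cast_add, Nat.cast_one]; ring,
        show (q * (((k :: ks).length : ℕ) : ℤ) + Q)
          = q + (q * (ks.length : ℕ) + Q) by simp only [List.length_cons, List.sum_cons, Nat.cast_add, Nat.cast_one]; ring,
        show (r * (((k :: ks).length : ℕ) : ℤ) + (((k :: ks).sum : ℕ) : ℤ) + R)
          = (r + (k : ℕ)) + (r * (ks.length : ℕ) + ((ks.sum : ℕ) : ℤ) + R) by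
            simp only [List.length_cons, List.sum_cons, Nat.cast_add, Nat.cast_one]; ring]
    exact h3

lemma stdMon_spec :
    ∀ w ∈ VA.StdSet S.A S.b S.c S.β S.γ,
      ∃ t : ℤ × ℤ × ℤ, S.SEig w t ∧ (t.1 = 1 → t.2.1 = 1 → t.2.2 ≠ 0) := by
  rintro w ⟨ns, ms, ss, ts, -, -, -, -, rfl⟩
  have h4 := (S.eig_chain S.eig_γ ts (rest := [])
    (S.eig_one : S.Eig true (VA.wlist S.A []) 0 0 0))
  obtain ⟨e4, h4⟩ := h4
  obtain ⟨e3, h3⟩ := S.eig_chain S.eig_β ss h4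
  obtain ⟨e2, h2⟩ := S.eig_chain S.eig_c ms h3
  obtain ⟨e1, h1⟩ := S.eig_chain S.eig_b ns h2
  have hform : VA.stdMon S.A S.b S.c S.β S.γ ns ms ss ts
      = VA.wlist S.A ((ns.map fun k => S.A.D^[k] S.b)
        ++ ((ms.map fun k => S.A.D^[k] S.c)
        ++ ((ss.map fun k => S.A.D^[k] S.β)
        ++ ((ts.map fun k => S.A.D^[k] S.γ) ++ ([] : List V))))) := by
    rw [VA.stdMon]
    simp [List.append_assoc]
  rw [← hform] at h1
  refine ⟨_, h1.toSEig, ?_⟩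
  intro hp hq
  dsimp only at hp hq ⊢
  omega

lemma xdef : S.xx = S.A.wick S.β (S.A.wick S.γ S.γ)
    - S.A.wick S.b (S.A.wick S.c S.γ) + (3 / 2 : ℂ) • S.A.D S.γ := rfl

lemma seig_x : S.SEig S.xx ((0 : ℤ), (1 : ℤ), (0 : ℤ)) := by
  rw [S.xdef]
  have hu := (S.eig_wick S.eig_β (S.eig_wick S.eig_γ S.eig_γ)).toSEig
  have hw := (S.eig_wick S.eig_b (S.eig_wick S.eig_c S.eig_γ)).toSEig
  have hd := (S.eig_D S.eig_γ).toSEig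
  norm_num at hu hw hd
  exact S.seig_add (S.seig_sub hu hw) (S.seig_smul _ hd)

lemma one_mem_StdSet : S.A.one ∈ VA.StdSet S.A S.b S.c S.β S.γ :=
  ⟨[], [], [], [], List.isChain_nil, List.isChain_nil, List.isChain_nil, List.isChain_nil, rfl⟩

lemma circ1β_x : S.A.circ 1 S.β S.xx = (3 / 2 : ℂ) • S.A.one := by
  have hβγ11 : S.A.circ 1 S.β S.γ = 0 := S.hβγ1 1 le_rfl
  have hββ0 : S.A.circ 0 S.β S.β = 0 := S.hββ 0 le_rfl
  have hββ1 : S.A.circ 1 S.β S.β = 0 := S.hββ 1 (by norm_num)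
  have hβb0 : S.A.circ 0 S.β S.b = 0 := S.hβb 0 le_rfl
  have hβb1 : S.A.circ 1 S.β S.b = 0 := S.hβb 1 (by norm_num)
  have hβc0 : S.A.circ 0 S.β S.c = 0 := S.hβc 0 le_rfl
  have hβc1 : S.A.circ 1 S.β S.c = 0 := S.hβc 1 (by norm_num)
  have h1one : S.A.circ 1 S.β S.A.one = 0 := S.A.unit_right_nonneg 1 _ (by norm_num)
  have hγγ : S.A.circ 1 S.β (S.A.wick S.γ S.γ) = 0 := by
    rw [S.wick_def, S.comm1 S.hβ (-1) S.γ S.γ, hβγ11, S.hβγ0]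
    rw [show ((1 : ℤ) + -1) = 0 by norm_num, S.A.unit_left]
    simp
  have hu : S.A.circ 1 S.β (S.A.wick S.β (S.A.wick S.γ S.γ)) = 0 := by
    rw [S.wick_def, S.comm1 S.hβ (-1) S.β (S.A.wick S.γ S.γ), hγγ, hββ0, hββ1]
    simp
  have hcγ : S.A.circ 1 S.β (S.A.wick S.c S.γ) = 0 := by
    rw [S.wick_def, S.comm1 S.hβ (-1) S.c S.γ, hβγ11, hβc0, hβc1]
    simp
  have hw : S.A.circ 1 S.β (S.A.wick S.b (S.A.wick S.c S.γ)) = 0 := by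
    rw [S.wick_def, S.comm1 S.hβ (-1) S.b (S.A.wick S.c S.γ), hcγ, hβb0, hβb1]
    simp
  have hd : S.A.circ 1 S.β (S.A.D S.γ) = S.A.one := by
    rw [S.D_def, S.comm1 S.hβ (-2) S.γ S.A.one, h1one, hβγ11, S.hβγ0]
    rw [show ((1 : ℤ) + -2) = -1 by norm_num, S.A.unit_left, if_pos rfl]
    simp
  rw [S.xdef, map_add, map_sub, map_smul, hu, hw, hd]
  simp

lemma x_ne_zero
    (hli : LinearIndependent ℂ (fun v : VA.StdSet S.A S.b S.c S.β S.γ => (v : V))) :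
    S.xx ≠ 0 := by
  intro h
  have h1 := S.circ1β_x
  rw [h, map_zero] at h1
  have hone : S.A.one ≠ 0 := hli.ne_zero ⟨S.A.one, S.one_mem_StdSet⟩
  have : (3 / 2 : ℂ) • S.A.one = 0 := h1.symm
  rcases smul_eq_zero.mp this with h' | h'
  · norm_num at h'
  · exact hone h'

lemma eigen_indep {ι : Type} (s : Finset ι) :
    ∀ (x : V) (y : ι → V) (τ : ι → ℤ × ℤ × ℤ),
      S.SEig x ((0 : ℤ), (1 : ℤ), (0 : ℤ)) → (∀ i ∈ s, S.SEig (y i) (τ i)) →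
      (∀ i ∈ s, τ i ≠ ((0 : ℤ), (1 : ℤ), (0 : ℤ))) →
      x = ∑ i ∈ s, y i → x = 0 := by
  classical
  induction s using Finset.induction_on with
  | empty =>
    intro x y τ _ _ _ hsum
    simpa using hsum
  | @insert a s ha ih =>
    intro x y τ hx hy hτ hsum
    have hta := hτ a (Finset.mem_insert_self a s)
    obtain ⟨T, lam, l0, hTx, hTy, hne⟩ :
        ∃ (T : V →ₗ[ℂ] V) (lam : ι → ℤ) (l0 : ℤ), T x = ((l0 : ℤ) : ℂ) • x ∧
          (∀ i ∈ insert a s, T (y i) = (((lam i : ℤ)) : ℂ) • y i) ∧ lam a ≠ l0 := by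
      by_cases h1 : (τ a).1 = 0
      · by_cases h2 : (τ a).2.1 = 1
        · refine ⟨S.HH, fun i => (τ i).2.2, 0, hx.2.2,
            fun i hi => (hy i hi).2.2, fun hc => hta ?_⟩
          simp [Prod.ext_iff, h1, h2, hc]
        · exact ⟨S.MM, fun i => (τ i).2.1, 1, hx.2.1, fun i hi => (hy i hi).2.1, h2⟩
      · exact ⟨S.NN, fun i => (τ i).1, 0, hx.1, fun i hi => (hy i hi).1, h1⟩
    have key : ((l0 - lam a : ℤ) : ℂ) • x = ∑ i ∈ s, ((lam i - lam a : ℤ) : ℂ) • y i := by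
      have e1 : T x - ((lam a : ℤ) : ℂ) • x = ((l0 - lam a : ℤ) : ℂ) • x := by
        rw [hTx, ← sub_smul]
        push_cast
        ring_nf
      calc ((l0 - lam a : ℤ) : ℂ) • x = T x - ((lam a : ℤ) : ℂ) • x := e1.symm
        _ = T (∑ i ∈ insert a s, y i) - ((lam a : ℤ) : ℂ) • ∑ i ∈ insert a s, y i := by
            rw [← hsum]
        _ = ∑ i ∈ insert a s, (T (y i) - ((lam a : ℤ) : ℂ) • y i) := by
            rw [map_sum, Finset.smul_sum, ← Finset.sum_sub_distrib]
        _ = ∑ i ∈ insert a s, ((lam i - lam a : ℤ) : ℂ) • y i := by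
            refine Finset.sum_congr rfl fun i hi => ?_
            rw [hTy i hi, ← sub_smul]
            push_cast
            ring_nf
        _ = ∑ i ∈ s, ((lam i - lam a : ℤ) : ℂ) • y i := by
            rw [Finset.sum_insert ha]
            norm_num
    have hzero := ih (((l0 - lam a : ℤ) : ℂ) • x) (fun i => ((lam i - lam a : ℤ) : ℂ) • y i) τ
      (S.seig_smul _ hx)
      (fun i hi => S.seig_smul _ (hy i (Finset.mem_insert_of_mem hi)))
      (fun i hi => hτ i (Finset.mem_insert_of_mem hi)) key
    have hcast : ((l0 - lam a : ℤ) : ℂ) ≠ 0 := by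
      rw [Int.cast_ne_zero]
      omega
    rcases smul_eq_zero.mp hzero with h' | h'
    · exact absurd h' hcast
    · exact h'

theorem final
    (hspan : Submodule.span ℂ (VA.StdSet S.A S.b S.c S.β S.γ) = ⊤)
    (hli : LinearIndependent ℂ (fun v : VA.StdSet S.A S.b S.c S.β S.γ => (v : V)))
    (v : V) : S.A.circ 0 S.J v ≠ S.xx := by
  intro hv
  have hvmem : v ∈ Submodule.span ℂ (VA.StdSet S.A S.b S.c S.β S.γ) := by
    rw [hspan]
    exact Submodule.mem_top
  obtain ⟨n, f, g, hsum⟩ := Submodule.mem_span_set'.mp hvmem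
  choose t hS hnum using fun i : Fin n => S.stdMon_spec (g i) (g i).2
  have hxsum : S.xx = ∑ i, f i • S.QQ ((g i : V)) := by
    rw [← hv, show S.A.circ 0 S.J v = S.QQ v from rfl, ← hsum, map_sum]
    exact Finset.sum_congr rfl fun i _ => by rw [map_smul]
  have hyS : ∀ i ∈ Finset.univ, S.SEig (f i • S.QQ ((g i : V)))
      ((t i).1 - 1, (t i).2.1, (t i).2.2) :=
    fun i _ => S.seig_smul _ (S.seig_Q (hS i))
  have hyne : ∀ i ∈ Finset.univ,
      (((t i).1 - 1, (t i).2.1, (t i).2.2) : ℤ × ℤ × ℤ) ≠ ((0 : ℤ), (1 : ℤ), (0 : ℤ)) := by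
    intro i _ hc
    rw [Prod.ext_iff] at hc
    obtain ⟨hc1, hc2⟩ := hc
    rw [Prod.ext_iff] at hc2
    obtain ⟨hc2, hc3⟩ := hc2
    simp only at hc1 hc2 hc3
    exact hnum i (by omega) (by omega) (by omega)
  exact S.x_ne_zero hli
    (S.eigen_indep Finset.univ S.xx _ _ S.seig_x hyS hyne hxsum)

end Ctx
end BRST

/-- The cocycle `x = :βγ²: - :bcγ: + (3/2)∂γ` is not a BRST
coboundary (here the standard monomials form a basis of `𝒲`, which is expressed by the
span and linear-independence hypotheses). -/
theorem stmt13 (V : Type) [AddCommGroup V] [Module ℂ V] (A : VA V)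
    (b c β γ : V)
    (hb : b ∈ A.odd) (hc : c ∈ A.odd)
    (hbc0 : A.circ 0 b c = A.one) (hbc : ∀ n : ℤ, 1 ≤ n → A.circ n b c = 0)
    (hcb0 : A.circ 0 c b = A.one) (hcb : ∀ n : ℤ, 1 ≤ n → A.circ n c b = 0)
    (hbb : ∀ n : ℤ, 0 ≤ n → A.circ n b b = 0)
    (hcc : ∀ n : ℤ, 0 ≤ n → A.circ n c c = 0)
    (hβ : β ∈ A.even) (hγ : γ ∈ A.even)
    (hβγ0 : A.circ 0 β γ = A.one) (hβγ : ∀ n : ℤ, 1 ≤ n → A.circ n β γ = 0)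
    (hγβ0 : A.circ 0 γ β = -A.one) (hγβ : ∀ n : ℤ, 1 ≤ n → A.circ n γ β = 0)
    (hββ : ∀ n : ℤ, 0 ≤ n → A.circ n β β = 0)
    (hγγ : ∀ n : ℤ, 0 ≤ n → A.circ n γ γ = 0)
    (hcross : ∀ n : ℤ, 0 ≤ n →
      A.circ n b β = 0 ∧ A.circ n b γ = 0 ∧ A.circ n c β = 0 ∧ A.circ n c γ = 0 ∧
      A.circ n β b = 0 ∧ A.circ n γ b = 0 ∧ A.circ n β c = 0 ∧ A.circ n γ c = 0)
    (LS LE LW J : V)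
    (hLS : LS = A.wick (A.D β) γ + (2 : ℂ) • A.wick β (A.D γ))
    (hLE : LE = -(A.wick (A.D b) c) - (2 : ℂ) • A.wick b (A.D c))
    (hLW : LW = LE + LS)
    (hJ : J = A.wick (LS + (1 / 2 : ℂ) • LE) c + (3 / 4 : ℂ) • A.D (A.D c))
    (hspan : Submodule.span ℂ (VA.StdSet A b c β γ) = ⊤)
    (hli : LinearIndependent ℂ (fun v : VA.StdSet A b c β γ => (v : V)))
    (x : V) (hx : x = A.wick β (A.wick γ γ) - A.wick b (A.wick c γ) + (3 / 2 : ℂ) • A.D γ)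
    :
    ∀ v : V, A.circ 0 J v ≠ x := by
  subst hJ hx hLS hLE
  intro v
  exact BRST.Ctx.final
    ⟨A, b, c, β, γ, hb, hc, hβ, hγ, hbc0, hbc, hcb0, hcb, hbb, hcc, hβγ0, hβγ,
      hγβ0, hγβ, hββ, hγγ,
      fun n h => (hcross n h).1,
      fun n h => (hcross n h).2.1,
      fun n h => (hcross n h).2.2.1,
      fun n h => (hcross n h).2.2.2.1,
      fun n h => (hcross n h).2.2.2.2.1,
      fun n h => (hcross n h).2.2.2.2.2.1,
      fun n h => (hcross n h).2.2.2.2.2.2.1,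
      fun n h => (hcross n h).2.2.2.2.2.2.2⟩
    hspan hli v
end

section
/- For each integer $k \ge 0$, the $k$-th Wick power $x^k$ of $x = :\beta\gamma^2:-:bc\gamma:+\frac32\partial\gamma$ equals $:\beta^k\gamma^{2k}: - k:bc\beta^{k-1}\gamma^{2k-1}:$ plus an element of $\mathcal D$ (the span of standard monomials containing at least one derivative). -/
open scoped BigOperators

lemma zchoose_zero (m : ℤ) : zchoose m 0 = 1 := by
  simp [zchoose]

lemma zchoose_neg_one (j : ℕ) : zchoose (-1) j = (-1 : ℂ) ^ j := by
  have h : ∏ i ∈ Finset.range j, ((-1 : ℤ) - (i : ℂ)) = (-1 : ℂ) ^ j * (Nat.factorial j : ℂ) := by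
    induction j with
    | zero => simp
    | succ n ih =>
      rw [Finset.prod_range_succ, ih]
      push_cast [Nat.factorial_succ]
      ring
  rw [zchoose]
  push_cast at h ⊢
  rw [h]
  have : (Nat.factorial j : ℂ) ≠ 0 := Nat.cast_ne_zero.mpr (Nat.factorial_ne_zero j)
  field_simp

lemma zchoose_neg_two (j : ℕ) : zchoose (-2) j = (-1 : ℂ) ^ j * (j + 1) := by
  have h : ∏ i ∈ Finset.range j, ((-2 : ℤ) - (i : ℂ)) = (-1 : ℂ) ^ j * (Nat.factorial (j+1) : ℂ) := by
    induction j with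
    | zero => simp
    | succ n ih =>
      rw [Finset.prod_range_succ, ih]
      push_cast [Nat.factorial_succ]
      ring
  rw [zchoose]
  push_cast at h ⊢
  rw [h]
  have h1 : (Nat.factorial j : ℂ) ≠ 0 := Nat.cast_ne_zero.mpr (Nat.factorial_ne_zero j)
  rw [Nat.factorial_succ]
  push_cast
  field_simp

lemma prod_range_cast_sub (m j : ℕ) (h : j ≤ m) :
    (∏ i ∈ Finset.range j, ((m : ℂ) - (i : ℂ))) * (Nat.factorial (m - j) : ℂ)
      = (Nat.factorial m : ℂ) := by
  induction j with
  | zero => simp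
  | succ n ih =>
    have hn : n ≤ m := Nat.le_of_succ_le h
    have hlt : n < m := h
    rw [Finset.prod_range_succ]
    have hmn : m - n = (m - (n+1)) + 1 := by omega
    have : (Nat.factorial (m - n) : ℂ)
        = ((m : ℂ) - n) * (Nat.factorial (m - (n+1)) : ℂ) := by
      rw [hmn, Nat.factorial_succ]
      push_cast
      have : ((m - (n+1) : ℕ) : ℂ) = (m : ℂ) - (n : ℂ) - 1 := by
        push_cast [Nat.cast_sub h]; ring
      rw [this]; ring
    calc (∏ i ∈ Finset.range n, ((m : ℂ) - i)) * ((m:ℂ) - n) * (Nat.factorial (m - (n+1)) : ℂ)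
        = (∏ i ∈ Finset.range n, ((m : ℂ) - i)) * (((m:ℂ) - n) * (Nat.factorial (m - (n+1)) : ℂ)) := by ring
      _ = (∏ i ∈ Finset.range n, ((m : ℂ) - i)) * (Nat.factorial (m - n) : ℂ) := by rw [← this]
      _ = _ := ih hn

lemma zchoose_self (m : ℕ) : zchoose (m : ℤ) m = 1 := by
  have := prod_range_cast_sub m m le_rfl
  simp at this
  rw [zchoose]
  push_cast
  rw [this]
  exact div_self (Nat.cast_ne_zero.mpr (Nat.factorial_ne_zero m))

lemma zchoose_pred (m : ℕ) (h : 1 ≤ m) : zchoose (m : ℤ) (m - 1) = (m : ℂ) := by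
  have h2 := prod_range_cast_sub m (m-1) (Nat.sub_le m 1)
  have hmm : m - (m - 1) = 1 := by omega
  rw [hmm] at h2
  simp [Nat.factorial_one] at h2
  rw [zchoose]
  push_cast
  rw [h2]
  have hf : (Nat.factorial m : ℂ) = (m : ℂ) * (Nat.factorial (m-1) : ℂ) := by
    conv_lhs => rw [show m = (m-1)+1 by omega]
    rw [Nat.factorial_succ]
    push_cast
    rw [show ((m-1:ℕ):ℂ) = (m:ℂ) - 1 by push_cast [Nat.cast_sub h]; ring]
    ring
  rw [hf]
  have : (Nat.factorial (m-1) : ℂ) ≠ 0 := Nat.cast_ne_zero.mpr (Nat.factorial_ne_zero _)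
  field_simp

lemma zchoose_nat_eq_zero (m j : ℕ) (h : m < j) : zchoose (m : ℤ) j = 0 := by
  rw [zchoose]
  have : (∏ i ∈ Finset.range j, (((m : ℤ) : ℂ) - (i:ℂ))) = 0 := by
    apply Finset.prod_eq_zero (Finset.mem_range.mpr h)
    push_cast; ring
  rw [this, zero_div]

namespace VA

variable {V : Type} [AddCommGroup V] [Module ℂ V] (A : VA V)

lemma circ_one_ne {n : ℤ} (h : n ≠ -1) (v : V) : A.circ n A.one v = 0 := by
  rw [A.unit_left, if_neg h]

lemma circ_one_eq (v : V) : A.circ (-1) A.one v = v := by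
  rw [A.unit_left, if_pos rfl]

/-- Unified super-commutator formula. -/
lemma comm_eps {a g : V} {ε : ℂ}
    (h : (ε = 1 ∧ (a ∈ A.even ∨ g ∈ A.even)) ∨ (ε = -1 ∧ a ∈ A.odd ∧ g ∈ A.odd))
    (m n : ℤ) (v : V) :
    A.circ m a (A.circ n g v) = ε • A.circ n g (A.circ m a v)
      + ∑ᶠ j : ℕ, zchoose m j • A.circ (m + n - (j : ℤ)) (A.circ (j : ℤ) a g) v := by
  rcases h with ⟨he, hp⟩ | ⟨he, ha, hg⟩
  · subst he
    have := A.comm_even hp m n v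
    rw [one_smul]
    exact sub_eq_iff_eq_add'.mp this
  · subst he
    have := A.comm_odd ha hg m n v
    rw [neg_one_smul ℂ]
    rw [add_comm] at this
    exact eq_neg_add_of_add_eq this

/-- Unified iterate formula. -/
lemma iter_eps {a g : V} {ε : ℂ}
    (h : (ε = 1 ∧ (a ∈ A.even ∨ g ∈ A.even)) ∨ (ε = -1 ∧ a ∈ A.odd ∧ g ∈ A.odd))
    (m n : ℤ) (v : V) :
    A.circ m (A.circ n a g) v = ∑ᶠ j : ℕ, ((-1 : ℂ) ^ j * zchoose n j) •
      (A.circ (n - (j : ℤ)) a (A.circ (m + (j : ℤ)) g v)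
        - (ε * (-1 : ℂ) ^ n) • A.circ (n + m - (j : ℤ)) g (A.circ (j : ℤ) a v)) := by
  rcases h with ⟨he, hp⟩ | ⟨he, ha, hg⟩
  · subst he
    rw [A.iterate_even hp m n v]
    exact finsum_congr fun j => by rw [one_mul]
  · subst he
    rw [A.iterate_odd ha hg m n v]
    exact finsum_congr fun j => by
      rw [neg_one_mul, neg_smul, sub_neg_eq_add]

/-- `∂` commutes with modes: `(∂a)(m) = -m a(m-1)` on any vector. -/
lemma circ_D (m : ℤ) (a v : V) :
    A.circ m (A.D a) v = (-m : ℂ) • A.circ (m - 1) a v := by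
  have hz : ((-1 : ℂ) ^ (-2 : ℤ)) = 1 := by norm_num
  rw [VA.D, A.iterate_even (Or.inr A.one_even) m (-2) v]
  set f : ℕ → V := fun j => ((-1 : ℂ) ^ j * zchoose (-2) j) •
      (A.circ (-2 - (j : ℤ)) a (A.circ (m + (j : ℤ)) A.one v)
        - ((-1 : ℂ) ^ (-2 : ℤ)) • A.circ (-2 + m - (j : ℤ)) A.one (A.circ (j : ℤ) a v)) with hf
  rcases lt_trichotomy m 0 with hm | hm | hm
  · -- m ≤ -1 : only j = -1-m survives
    set q : ℕ := (-1 - m).toNat with hq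
    have hqz : (q : ℤ) = -1 - m := Int.toNat_of_nonneg (by omega)
    have : ∑ᶠ j, f j = f q := by
      apply finsum_eq_single f q
      intro j hj
      have h1 : A.circ (m + (j : ℤ)) A.one v = 0 := by
        apply A.circ_one_ne
        intro hcon
        apply hj
        have : (j : ℤ) = (q : ℤ) := by omega
        exact_mod_cast this
      have h2 : A.circ (-2 + m - (j : ℤ)) A.one (A.circ (j : ℤ) a v) = 0 :=
        A.circ_one_ne (by omega) _
      rw [hf]
      simp only [h1, h2, map_zero, smul_zero, sub_zero, smul_zero]
    rw [this]
    simp only [hf]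
    have h1 : A.circ (m + (q : ℤ)) A.one v = v := by
      rw [show m + (q : ℤ) = -1 by omega]
      exact A.circ_one_eq v
    have h2 : A.circ (-2 + m - (q : ℤ)) A.one (A.circ (q : ℤ) a v) = 0 :=
      A.circ_one_ne (by omega) _
    rw [h1, h2, hz, one_smul, sub_zero, zchoose_neg_two, show (-2 : ℤ) - (q:ℤ) = m - 1 by omega]
    congr 1
    have hqc : ((q : ℂ) + 1) = -m := by
      have : ((q : ℤ) : ℂ) = ((-1 - m : ℤ) : ℂ) := by rw [hqz]
      push_cast at this ⊢
      rw [this]; ring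
    rw [← mul_assoc, ← mul_pow]
    norm_num [hqc]
  · -- m = 0
    subst hm
    have : ∑ᶠ j, f j = 0 := by
      apply finsum_eq_zero_of_forall_eq_zero
      intro j
      have h1 : A.circ (0 + (j : ℤ)) A.one v = 0 := A.circ_one_ne (by omega) _
      have h2 : A.circ (-2 + 0 - (j : ℤ)) A.one (A.circ (j : ℤ) a v) = 0 :=
        A.circ_one_ne (by omega) _
      rw [hf]
      simp only [h1, h2, map_zero, smul_zero, sub_zero, smul_zero]
    rw [this]
    norm_num
  · -- m ≥ 1 : only j = m-1 survives
    set p : ℕ := (m - 1).toNat with hp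
    have hpz : (p : ℤ) = m - 1 := Int.toNat_of_nonneg (by omega)
    have : ∑ᶠ j, f j = f p := by
      apply finsum_eq_single f p
      intro j hj
      have h1 : A.circ (m + (j : ℤ)) A.one v = 0 := A.circ_one_ne (by omega) _
      have h2 : A.circ (-2 + m - (j : ℤ)) A.one (A.circ (j : ℤ) a v) = 0 := by
        apply A.circ_one_ne
        intro hcon
        apply hj
        have : (j : ℤ) = (p : ℤ) := by omega
        exact_mod_cast this
      rw [hf]
      simp only [h1, h2, map_zero, smul_zero, sub_zero, smul_zero]
    rw [this]
    simp only [hf]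
    have h1 : A.circ (m + (p : ℤ)) A.one v = 0 := A.circ_one_ne (by omega) _
    have h2 : A.circ (-2 + m - (p : ℤ)) A.one (A.circ (p : ℤ) a v) = A.circ (p : ℤ) a v := by
      rw [show (-2 : ℤ) + m - (p:ℤ) = -1 by omega]
      exact A.circ_one_eq _
    rw [h1, h2, hz, one_smul, map_zero, zero_sub, zchoose_neg_two,
      show (p : ℤ) = m - 1 from hpz, smul_neg, ← neg_smul]
    congr 1
    have hc : ((p : ℂ) + 1) = m := by
      have : ((p : ℤ) : ℂ) = ((m - 1 : ℤ) : ℂ) := by rw [hpz]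
      push_cast at this ⊢
      rw [this]; ring
    rw [← mul_assoc, ← mul_pow]
    norm_num [hc]

end VA

namespace VA

variable {V : Type} [AddCommGroup V] [Module ℂ V] (A : VA V)

lemma prod_one_add (j : ℕ) : (∏ i ∈ Finset.range j, ((1:ℂ) + (i:ℂ))) = (Nat.factorial j : ℂ) := by
  induction j with
  | zero => simp
  | succ n ih => rw [Finset.prod_range_succ, ih, Nat.factorial_succ]; push_cast; ring

lemma circ_D_iter (j : ℕ) (m : ℤ) (a v : V) :
    A.circ m (A.D^[j] a) v
      = (∏ i ∈ Finset.range j, (-(m:ℂ) + (i:ℂ))) • A.circ (m - j) a v := by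
  induction j generalizing m with
  | zero => simp
  | succ n ih =>
    rw [Function.iterate_succ_apply', A.circ_D, ih (m-1)]
    rw [← smul_assoc]
    congr 1
    · have h1 : (∏ i ∈ Finset.range n, (-(((m-1:ℤ)):ℂ) + (i:ℂ)))
          = ∏ i ∈ Finset.range n, (-(m:ℂ) + ((i+1 : ℕ):ℂ)) :=
        Finset.prod_congr rfl fun i _ => by push_cast; ring
      rw [smul_eq_mul, h1, Finset.prod_range_succ']
      push_cast
      ring
    · congr 1
      push_cast
      ring

lemma circ_neg (j : ℕ) (a v : V) :
    A.circ (-1 - (j:ℤ)) a v = ((Nat.factorial j : ℂ))⁻¹ • A.circ (-1) (A.D^[j] a) v := by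
  rw [A.circ_D_iter j (-1) a v]
  have h : (∏ i ∈ Finset.range j, (-(((-1):ℤ):ℂ) + (i:ℂ))) = (Nat.factorial j : ℂ) := by
    rw [← prod_one_add]
    exact Finset.prod_congr rfl fun i _ => by push_cast; ring
  rw [h, ← smul_assoc, smul_eq_mul,
    inv_mul_cancel₀ (Nat.cast_ne_zero.mpr (Nat.factorial_ne_zero j)), one_smul]

lemma D_smul (μ : ℂ) (u : V) : A.D (μ • u) = μ • A.D u := by
  unfold VA.D
  rw [map_smul]
  rfl

lemma D_one : A.D A.one = 0 := by
  unfold VA.D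
  exact A.circ_one_ne (by omega) _

/-- `a(m) (∂u) = m a(m-1) u + ∂(a(m) u)` for `m ≥ 0`. -/
lemma circ_shift_D {a u : V} {ε : ℂ}
    (h : (ε = 1 ∧ (a ∈ A.even ∨ u ∈ A.even)) ∨ (ε = -1 ∧ a ∈ A.odd ∧ u ∈ A.odd))
    (m : ℕ) :
    A.circ (m:ℤ) a (A.D u) = (m:ℂ) • A.circ ((m:ℤ) - 1) a u + A.D (A.circ (m:ℤ) a u) := by
  have base := A.comm_eps h (m:ℤ) (-2) A.one
  rw [show A.circ (-2) u A.one = A.D u from rfl] at base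
  rw [A.unit_right_nonneg (m:ℤ) a (by positivity), map_zero, smul_zero, zero_add] at base
  set f : ℕ → V := fun j => zchoose (m:ℤ) j • A.circ ((m:ℤ) + -2 - (j:ℤ)) (A.circ (j:ℤ) a u) A.one
    with hfdef
  rcases Nat.eq_zero_or_pos m with hm | hm
  · subst hm
    have : ∑ᶠ j, f j = f 0 := by
      apply finsum_eq_single f 0
      intro j hj
      have hj' : 0 < j := Nat.pos_of_ne_zero hj
      rw [hfdef]
      simp only []
      rw [zchoose_nat_eq_zero 0 j hj', zero_smul]
    rw [base, this, hfdef]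
    simp only []
    rw [zchoose_zero, one_smul]
    norm_num
    rfl
  · have hsup : Function.support f ⊆ (({m - 1, m} : Finset ℕ) : Set ℕ) := by
      intro j hj
      simp only [Finset.coe_insert, Finset.coe_singleton, Set.mem_insert_iff,
        Set.mem_singleton_iff]
      by_contra hcon
      push_neg at hcon
      apply hj
      rw [hfdef]
      simp only []
      rcases lt_trichotomy j m with hlt | heq | hgt
      · have : ((m:ℤ) + -2 - (j:ℤ)) ≥ 0 := by omega
        rw [A.unit_right_nonneg _ _ this, smul_zero]
      · exact absurd heq hcon.2
      · rw [zchoose_nat_eq_zero m j hgt, zero_smul]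
    have hne : m - 1 ≠ m := by omega
    rw [base, finsum_eq_finset_sum_of_support_subset f hsup, Finset.sum_pair hne, hfdef]
    simp only []
    have e1 : ((m:ℤ) + -2 - ((m-1 : ℕ):ℤ)) = -1 := by omega
    have e2 : ((m:ℤ) + -2 - ((m : ℕ):ℤ)) = -2 := by omega
    rw [e1, e2, A.unit_right_wick, zchoose_self, one_smul]
    have e3 : (((m-1:ℕ)):ℤ) = (m:ℤ) - 1 := by omega
    rw [e3, zchoose_pred m hm]
    rfl

end VA

namespace VA

/-- Bundle of the bc-βγ system data. -/
structure Setup (V : Type) [AddCommGroup V] [Module ℂ V] where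
  A : VA V
  b : V
  c : V
  β : V
  γ : V
  hb : b ∈ A.odd
  hc : c ∈ A.odd
  hbc0 : A.circ 0 b c = A.one
  hbc : ∀ n : ℤ, 1 ≤ n → A.circ n b c = 0
  hcb0 : A.circ 0 c b = A.one
  hcb : ∀ n : ℤ, 1 ≤ n → A.circ n c b = 0
  hbb : ∀ n : ℤ, 0 ≤ n → A.circ n b b = 0
  hcc : ∀ n : ℤ, 0 ≤ n → A.circ n c c = 0
  hβ : β ∈ A.even
  hγ : γ ∈ A.even
  hβγ0 : A.circ 0 β γ = A.one
  hβγ : ∀ n : ℤ, 1 ≤ n → A.circ n β γ = 0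
  hγβ0 : A.circ 0 γ β = -A.one
  hγβ : ∀ n : ℤ, 1 ≤ n → A.circ n γ β = 0
  hββ : ∀ n : ℤ, 0 ≤ n → A.circ n β β = 0
  hγγ : ∀ n : ℤ, 0 ≤ n → A.circ n γ γ = 0
  hcross : ∀ n : ℤ, 0 ≤ n →
    A.circ n b β = 0 ∧ A.circ n b γ = 0 ∧ A.circ n c β = 0 ∧ A.circ n c γ = 0 ∧
    A.circ n β b = 0 ∧ A.circ n γ b = 0 ∧ A.circ n β c = 0 ∧ A.circ n γ c = 0

/-- Koszul sign for swapping two letters. -/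
noncomputable def ksgn (L L' : Fin 4 × ℕ) : ℂ :=
  if L.1.val < 2 ∧ L'.1.val < 2 then -1 else 1

namespace Setup

variable {V : Type} [AddCommGroup V] [Module ℂ V] (S : Setup V)

def gen : Fin 4 → V
  | 0 => S.b
  | 1 => S.c
  | 2 => S.β
  | 3 => S.γ

/-- A letter `(i, n)` denotes `∂ⁿ gᵢ`. -/
def el (L : Fin 4 × ℕ) : V := S.A.D^[L.2] (S.gen L.1)

lemma gen_odd {i : Fin 4} (h : i.val < 2) : S.gen i ∈ S.A.odd := by
  fin_cases i
  · exact S.hb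
  · exact S.hc
  · exact absurd h (by decide)
  · exact absurd h (by decide)

lemma gen_even {i : Fin 4} (h : ¬ i.val < 2) : S.gen i ∈ S.A.even := by
  fin_cases i
  · exact absurd (by decide) h
  · exact absurd (by decide) h
  · exact S.hβ
  · exact S.hγ

lemma D_odd (A : VA V) {a : V} (h : a ∈ A.odd) : A.D a ∈ A.odd :=
  A.circ_oe (-2) h A.one_even

lemma D_even (A : VA V) {a : V} (h : a ∈ A.even) : A.D a ∈ A.even :=
  A.circ_ee (-2) h A.one_even

lemma el_odd {L : Fin 4 × ℕ} (h : L.1.val < 2) : S.el L ∈ S.A.odd := by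
  rw [el]
  induction L.2 with
  | zero => exact S.gen_odd h
  | succ n ih => rw [Function.iterate_succ_apply']; exact D_odd S.A ih

lemma el_even {L : Fin 4 × ℕ} (h : ¬ L.1.val < 2) : S.el L ∈ S.A.even := by
  rw [el]
  induction L.2 with
  | zero => exact S.gen_even h
  | succ n ih => rw [Function.iterate_succ_apply']; exact D_even S.A ih

lemma pair_el (L L' : Fin 4 × ℕ) :
    (ksgn L L' = 1 ∧ (S.el L ∈ S.A.even ∨ S.el L' ∈ S.A.even)) ∨
      (ksgn L L' = -1 ∧ S.el L ∈ S.A.odd ∧ S.el L' ∈ S.A.odd) := by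
  by_cases h : L.1.val < 2 ∧ L'.1.val < 2
  · exact Or.inr ⟨if_pos h, S.el_odd h.1, S.el_odd h.2⟩
  · refine Or.inl ⟨if_neg h, ?_⟩
    rcases Decidable.not_and_iff_or_not.mp h with h1 | h1
    · exact Or.inl (S.el_even h1)
    · exact Or.inr (S.el_even h1)

lemma contr00 (i i' : Fin 4) (m : ℕ) :
    ∃ μ : ℂ, S.A.circ (m:ℤ) (S.gen i) (S.gen i') = μ • S.A.one ∧ (μ ≠ 0 → m = 0) := by
  rcases Nat.eq_zero_or_pos m with hm | hm
  · subst hm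
    have hz : ((0:ℕ):ℤ) = 0 := rfl
    fin_cases i <;> fin_cases i'
    · exact ⟨0, by rw [zero_smul, hz]; exact S.hbb 0 le_rfl, fun h => (h rfl).elim⟩
    · exact ⟨1, by rw [one_smul, hz]; exact S.hbc0, fun _ => rfl⟩
    · exact ⟨0, by rw [zero_smul, hz]; exact (S.hcross 0 le_rfl).1, fun h => (h rfl).elim⟩
    · exact ⟨0, by rw [zero_smul, hz]; exact (S.hcross 0 le_rfl).2.1, fun h => (h rfl).elim⟩
    · exact ⟨1, by rw [one_smul, hz]; exact S.hcb0, fun _ => rfl⟩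
    · exact ⟨0, by rw [zero_smul, hz]; exact S.hcc 0 le_rfl, fun h => (h rfl).elim⟩
    · exact ⟨0, by rw [zero_smul, hz]; exact (S.hcross 0 le_rfl).2.2.1, fun h => (h rfl).elim⟩
    · exact ⟨0, by rw [zero_smul, hz]; exact (S.hcross 0 le_rfl).2.2.2.1, fun h => (h rfl).elim⟩
    · exact ⟨0, by rw [zero_smul, hz]; exact (S.hcross 0 le_rfl).2.2.2.2.1, fun h => (h rfl).elim⟩
    · exact ⟨0, by rw [zero_smul, hz]; exact (S.hcross 0 le_rfl).2.2.2.2.2.2.1, fun h => (h rfl).elim⟩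
    · exact ⟨0, by rw [zero_smul, hz]; exact S.hββ 0 le_rfl, fun h => (h rfl).elim⟩
    · exact ⟨1, by rw [one_smul, hz]; exact S.hβγ0, fun _ => rfl⟩
    · exact ⟨0, by rw [zero_smul, hz]; exact (S.hcross 0 le_rfl).2.2.2.2.2.1, fun h => (h rfl).elim⟩
    · exact ⟨0, by rw [zero_smul, hz]; exact (S.hcross 0 le_rfl).2.2.2.2.2.2.2, fun h => (h rfl).elim⟩
    · exact ⟨-1, by rw [neg_smul, one_smul, hz]; exact S.hγβ0, fun _ => rfl⟩
    · exact ⟨0, by rw [zero_smul, hz]; exact S.hγγ 0 le_rfl, fun h => (h rfl).elim⟩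
  · have h1 : (1:ℤ) ≤ (m:ℤ) := by exact_mod_cast hm
    have h0 : (0:ℤ) ≤ (m:ℤ) := by positivity
    refine ⟨0, ?_, fun h => (h rfl).elim⟩
    rw [zero_smul]
    fin_cases i <;> fin_cases i'
    · exact S.hbb _ h0
    · exact S.hbc _ h1
    · exact (S.hcross _ h0).1
    · exact (S.hcross _ h0).2.1
    · exact S.hcb _ h1
    · exact S.hcc _ h0
    · exact (S.hcross _ h0).2.2.1
    · exact (S.hcross _ h0).2.2.2.1
    · exact (S.hcross _ h0).2.2.2.2.1
    · exact (S.hcross _ h0).2.2.2.2.2.2.1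
    · exact S.hββ _ h0
    · exact S.hβγ _ h1
    · exact (S.hcross _ h0).2.2.2.2.2.1
    · exact (S.hcross _ h0).2.2.2.2.2.2.2
    · exact S.hγβ _ h1
    · exact S.hγγ _ h0

end Setup
end VA

namespace VA
namespace Setup

variable {V : Type} [AddCommGroup V] [Module ℂ V] (S : Setup V)

lemma el_zero (i : Fin 4) : S.el (i, 0) = S.gen i := rfl

lemma contr0 (i : Fin 4) (L' : Fin 4 × ℕ) (m : ℕ) :
    ∃ μ : ℂ, S.A.circ (m:ℤ) (S.gen i) (S.el L') = μ • S.A.one ∧ (μ ≠ 0 → m = L'.2) := by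
  obtain ⟨i', q⟩ := L'
  induction q generalizing m with
  | zero => simpa [el] using S.contr00 i i' m
  | succ q ih =>
    have hel : S.el (i', q+1) = S.A.D (S.el (i', q)) := by
      rw [el, el, Function.iterate_succ_apply']
    have hpair := S.pair_el (i, 0) (i', q)
    rw [S.el_zero] at hpair
    rw [hel, S.A.circ_shift_D hpair m]
    rcases Nat.eq_zero_or_pos m with hm | hm
    · subst hm
      obtain ⟨μ, h1, _⟩ := ih 0
      refine ⟨0, ?_, fun h' => (h' rfl).elim⟩
      rw [h1, S.A.D_smul, S.A.D_one, smul_zero, Nat.cast_zero, zero_smul, zero_add, zero_smul]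
    · obtain ⟨μ1, h1, himp1⟩ := ih (m - 1)
      obtain ⟨μ2, h2, _⟩ := ih m
      have hc : ((m:ℤ) - 1) = (((m-1:ℕ)):ℤ) := by omega
      refine ⟨(m:ℂ) * μ1, ?_, ?_⟩
      · rw [hc, h1, h2, S.A.D_smul, S.A.D_one, smul_zero, add_zero, smul_smul]
      · intro hne
        have : μ1 ≠ 0 := by
          intro h0
          exact hne (by rw [h0, mul_zero])
        have := himp1 this
        omega

lemma contr (L L' : Fin 4 × ℕ) (m : ℕ) :
    ∃ μ : ℂ, S.A.circ (m:ℤ) (S.el L) (S.el L') = μ • S.A.one ∧ (μ ≠ 0 → m = L.2 + L'.2) := by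
  obtain ⟨i, n⟩ := L
  show ∃ μ : ℂ, S.A.circ (m:ℤ) (S.A.D^[n] (S.gen i)) (S.el L') = μ • S.A.one ∧ _
  rw [S.A.circ_D_iter n (m:ℤ)]
  by_cases h : m < n
  · refine ⟨0, ?_, fun h' => (h' rfl).elim⟩
    have hz : (∏ i ∈ Finset.range n, (-((m:ℤ):ℂ) + (i:ℂ))) = 0 := by
      apply Finset.prod_eq_zero (Finset.mem_range.mpr h)
      push_cast; ring
    rw [hz, zero_smul, zero_smul]
  · have hm : (m:ℤ) - (n:ℤ) = (((m - n : ℕ)):ℤ) := by omega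
    rw [hm]
    obtain ⟨μ, h1, himp⟩ := S.contr0 i L' (m - n)
    refine ⟨(∏ i ∈ Finset.range n, (-((m:ℤ):ℂ) + (i:ℂ))) * μ, ?_, ?_⟩
    · rw [h1, smul_smul]
    · intro hne
      have hμ : μ ≠ 0 := by
        intro h0
        exact hne (by rw [h0, mul_zero])
      have := himp hμ
      simp only []
      omega

/-- The contraction coefficient of two letters. -/
noncomputable def cf (L L' : Fin 4 × ℕ) (m : ℕ) : ℂ := (S.contr L L' m).choose

lemma cf_spec (L L' : Fin 4 × ℕ) (m : ℕ) :
    S.A.circ (m:ℤ) (S.el L) (S.el L') = S.cf L L' m • S.A.one :=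
  (S.contr L L' m).choose_spec.1

lemma cf_deg (L L' : Fin 4 × ℕ) (m : ℕ) (h : S.cf L L' m ≠ 0) : m = L.2 + L'.2 :=
  (S.contr L L' m).choose_spec.2 h

lemma circ_smul_one (n : ℤ) (μ : ℂ) (v : V) (hn : n ≠ -1) :
    S.A.circ n (μ • S.A.one) v = 0 := by
  rw [map_smul, LinearMap.smul_apply, S.A.circ_one_ne hn, smul_zero]

/-- Exact supercommutativity of letters inside Wick chains. -/
lemma wick_swap (L L' : Fin 4 × ℕ) (v : V) :
    S.A.circ (-1) (S.el L) (S.A.circ (-1) (S.el L') v)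
      = ksgn L L' • S.A.circ (-1) (S.el L') (S.A.circ (-1) (S.el L) v) := by
  rw [S.A.comm_eps (S.pair_el L L') (-1) (-1) v]
  have hz : ∀ j : ℕ, zchoose (-1) j •
      S.A.circ (-1 + -1 - (j:ℤ)) (S.A.circ (j:ℤ) (S.el L) (S.el L')) v = 0 := by
    intro j
    rw [S.cf_spec L L' j, S.circ_smul_one _ _ _ (by omega), smul_zero]
  rw [finsum_eq_zero_of_forall_eq_zero hz, add_zero]

/-- Commuting a nonnegative mode through a Wick chain. -/
lemma circ_pos (L L' : Fin 4 × ℕ) (m : ℕ) (v : V) :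
    S.A.circ (m:ℤ) (S.el L) (S.A.circ (-1) (S.el L') v)
      = ksgn L L' • S.A.circ (-1) (S.el L') (S.A.circ (m:ℤ) (S.el L) v)
        + S.cf L L' m • v := by
  rw [S.A.comm_eps (S.pair_el L L') (m:ℤ) (-1) v]
  congr 1
  have hval : (fun j : ℕ => zchoose (m:ℤ) j •
      S.A.circ ((m:ℤ) + -1 - (j:ℤ)) (S.A.circ (j:ℤ) (S.el L) (S.el L')) v) m
      = S.cf L L' m • v := by
    simp only []
    rw [S.cf_spec L L' m, zchoose_self, one_smul,
      show (m:ℤ) + -1 - (m:ℤ) = -1 by omega, map_smul, LinearMap.smul_apply, S.A.circ_one_eq]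
  rw [← hval]
  apply finsum_eq_single
  intro j hj
  rw [S.cf_spec L L' j, S.circ_smul_one _ _ _ (by omega), smul_zero]

lemma wick_sq_zero (L : Fin 4 × ℕ) (h : L.1.val < 2) (v : V) :
    S.A.circ (-1) (S.el L) (S.A.circ (-1) (S.el L) v) = 0 := by
  have hs := S.wick_swap L L v
  rw [ksgn, if_pos ⟨h, h⟩, neg_one_smul] at hs
  have h2 : S.A.circ (-1) (S.el L) (S.A.circ (-1) (S.el L) v)
      + S.A.circ (-1) (S.el L) (S.A.circ (-1) (S.el L) v) = 0 := by
    nth_rewrite 1 [hs]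
    abel
  rcases smul_eq_zero.mp (show (2:ℂ) • S.A.circ (-1) (S.el L) (S.A.circ (-1) (S.el L) v) = 0 by
    rw [two_smul]; exact h2) with h' | h'
  · exact absurd h' two_ne_zero
  · exact h'

end Setup
end VA

namespace VA
namespace Setup

variable {V : Type} [AddCommGroup V] [Module ℂ V] (S : Setup V)

/-- The monomial associated to a list of letters. -/
def mon (ls : List (Fin 4 × ℕ)) : V := S.A.wlist (ls.map S.el)

/-- Total (doubled) conformal weight of a list of letters. -/
def lwt (ls : List (Fin 4 × ℕ)) : ℕ := (ls.map (fun L => 1 + 2 * L.2)).sum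

lemma lwt_nil : lwt ([] : List (Fin 4 × ℕ)) = 0 := rfl

lemma lwt_cons (L : Fin 4 × ℕ) (ls : List (Fin 4 × ℕ)) :
    lwt (L :: ls) = 1 + 2 * L.2 + lwt ls := by
  simp [lwt]

lemma mon_nil : S.mon [] = S.A.one := rfl

lemma mon_cons (L : Fin 4 × ℕ) (ls : List (Fin 4 × ℕ)) :
    S.mon (L :: ls) = S.A.circ (-1) (S.el L) (S.mon ls) := rfl

lemma length_le_lwt (ls : List (Fin 4 × ℕ)) : ls.length ≤ lwt ls := by
  induction ls with
  | nil => simp [lwt]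
  | cons L t ih => rw [lwt_cons]; simp only [List.length_cons]; omega

/-- Span of letter monomials of weight `w` and length `≤ ℓ`. -/
def EE (w : ℤ) (ℓ : ℕ) : Submodule ℂ V :=
  Submodule.span ℂ {v | ∃ ls : List (Fin 4 × ℕ), (lwt ls : ℤ) = w ∧ ls.length ≤ ℓ ∧ v = S.mon ls}

lemma mon_mem_EE {ls : List (Fin 4 × ℕ)} {w : ℤ} {ℓ : ℕ}
    (h1 : (lwt ls : ℤ) = w) (h2 : ls.length ≤ ℓ) : S.mon ls ∈ S.EE w ℓ :=
  Submodule.subset_span ⟨ls, h1, h2, rfl⟩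

lemma EE_mono {w : ℤ} {ℓ ℓ' : ℕ} (h : ℓ ≤ ℓ') : S.EE w ℓ ≤ S.EE w ℓ' :=
  Submodule.span_mono (fun v ⟨ls, h1, h2, h3⟩ => ⟨ls, h1, le_trans h2 h, h3⟩)

lemma EE_zero {w : ℤ} {ℓ : ℕ} {v : V} (hv : v ∈ S.EE w ℓ) (hw : w < 0) : v = 0 := by
  have hle : S.EE w ℓ ≤ ⊥ := Submodule.span_le.mpr (by
    rintro u ⟨ls, h1, h2, h3⟩
    exact absurd h1 (by omega))
  simpa using hle hv

lemma apply_EE {w : ℤ} {ℓ : ℕ} (f : V →ₗ[ℂ] V) (p : Submodule ℂ V)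
    (h : ∀ ls : List (Fin 4 × ℕ), (lwt ls : ℤ) = w → ls.length ≤ ℓ → f (S.mon ls) ∈ p) :
    ∀ v ∈ S.EE w ℓ, f v ∈ p := by
  intro v hv
  have hle : S.EE w ℓ ≤ p.comap f := Submodule.span_le.mpr (by
    rintro u ⟨ls, h1, h2, h3⟩
    subst h3
    exact h ls h1 h2)
  exact hle hv

lemma wick_EE (L : Fin 4 × ℕ) {w : ℤ} {ℓ : ℕ} {v : V} (hv : v ∈ S.EE w ℓ) :
    S.A.circ (-1) (S.el L) v ∈ S.EE (w + (1 + 2 * L.2 : ℕ)) (ℓ + 1) := by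
  refine S.apply_EE (S.A.circ (-1) (S.el L)) _ ?_ v hv
  intro ls h1 h2
  rw [← S.mon_cons]
  exact S.mon_mem_EE (by rw [lwt_cons]; push_cast; omega) (by simpa using Nat.succ_le_succ h2)

lemma circ_pos_EE (L : Fin 4 × ℕ) (m : ℕ) {w : ℤ} {ℓ : ℕ} {v : V} (hv : v ∈ S.EE w ℓ) :
    S.A.circ (m:ℤ) (S.el L) v ∈ S.EE (w + (1 + 2 * L.2 : ℕ) - 2 * ((m:ℤ) + 1)) ℓ := by
  refine S.apply_EE (S.A.circ (m:ℤ) (S.el L)) _ ?_ v hv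
  intro ls h1 h2
  subst h1
  clear hv
  induction ls generalizing ℓ with
  | nil =>
    rw [mon_nil, S.A.unit_right_nonneg _ _ (by positivity)]
    exact zero_mem _
  | cons L' t ih =>
    rw [mon_cons, S.circ_pos]
    apply add_mem
    · apply Submodule.smul_mem
      have h3 := ih (ℓ := t.length) (le_refl _)
      have h4 := S.wick_EE L' h3
      have he : ((lwt t : ℤ) + (1 + 2 * L.2 : ℕ) - 2*((m:ℤ)+1)) + ((1 + 2*L'.2 : ℕ) : ℤ)
          = (lwt (L' :: t) : ℤ) + (1 + 2 * L.2 : ℕ) - 2*((m:ℤ)+1) := by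
        rw [lwt_cons]; push_cast; ring
      rw [he] at h4
      refine S.EE_mono ?_ h4
      simpa using h2
    · by_cases hcf : S.cf L L' m = 0
      · rw [hcf, zero_smul]; exact zero_mem _
      · apply Submodule.smul_mem
        have hdeg := S.cf_deg L L' m hcf
        have he : (lwt t : ℤ) = (lwt (L' :: t) : ℤ) + (1 + 2 * L.2 : ℕ) - 2*((m:ℤ)+1) := by
          rw [lwt_cons, hdeg]; push_cast; ring
        exact S.mon_mem_EE he (by simp at h2 ⊢; omega)

lemma el_D_iter (i : Fin 4) (n j : ℕ) : S.A.D^[j] (S.el (i, n)) = S.el (i, n + j) := by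
  rw [el, el, ← Function.iterate_add_apply]
  congr 1
  omega

lemma circ_EE (L : Fin 4 × ℕ) (m : ℤ) {w : ℤ} {ℓ : ℕ} {v : V} (hv : v ∈ S.EE w ℓ) :
    S.A.circ m (S.el L) v ∈ S.EE (w + (1 + 2 * L.2 : ℕ) - 2 * (m + 1)) (ℓ + 1) := by
  rcases le_or_gt 0 m with hm | hm
  · have hmn : m = ((m.toNat : ℕ) : ℤ) := by omega
    rw [hmn]
    exact S.EE_mono (Nat.le_succ ℓ) (S.circ_pos_EE L m.toNat hv)
  · obtain ⟨i, n⟩ := L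
    have hj : m = -1 - ((-1 - m).toNat : ℤ) := by omega
    set j : ℕ := (-1 - m).toNat with hjdef
    rw [hj, S.A.circ_neg j]
    apply Submodule.smul_mem
    rw [S.el_D_iter i n j]
    have h4 := S.wick_EE (i, n + j) hv
    have he : (w + ((1 + 2 * (n + j) : ℕ) : ℤ))
        = w + ((1 + 2 * n : ℕ) : ℤ) - 2 * ((-1 - (j:ℤ)) + 1) := by push_cast; ring
    rw [he] at h4
    exact h4

lemma circ_EE_zero (L : Fin 4 × ℕ) (m : ℤ) {w : ℤ} {ℓ : ℕ} {v : V} (hv : v ∈ S.EE w ℓ)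
    (hneg : w + (1 + 2 * L.2 : ℕ) - 2 * (m + 1) < 0) :
    S.A.circ m (S.el L) v = 0 :=
  S.EE_zero (S.circ_EE L m hv) hneg

end Setup
end VA

namespace VA
namespace Setup

variable {V : Type} [AddCommGroup V] [Module ℂ V] (S : Setup V)

lemma pair_el_wick (L1 L2 L3 : Fin 4 × ℕ) : ∃ ε : ℂ,
    (ε = 1 ∧ (S.el L1 ∈ S.A.even ∨ S.A.circ (-1) (S.el L2) (S.el L3) ∈ S.A.even)) ∨
    (ε = -1 ∧ S.el L1 ∈ S.A.odd ∧ S.A.circ (-1) (S.el L2) (S.el L3) ∈ S.A.odd) := by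
  by_cases h1 : L1.1.val < 2
  · by_cases h2 : L2.1.val < 2 <;> by_cases h3 : L3.1.val < 2
    · exact ⟨1, Or.inl ⟨rfl, Or.inr (S.A.circ_oo _ (S.el_odd h2) (S.el_odd h3))⟩⟩
    · exact ⟨-1, Or.inr ⟨rfl, S.el_odd h1, S.A.circ_oe _ (S.el_odd h2) (S.el_even h3)⟩⟩
    · exact ⟨-1, Or.inr ⟨rfl, S.el_odd h1, S.A.circ_eo _ (S.el_even h2) (S.el_odd h3)⟩⟩
    · exact ⟨1, Or.inl ⟨rfl, Or.inr (S.A.circ_ee _ (S.el_even h2) (S.el_even h3))⟩⟩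
  · exact ⟨1, Or.inl ⟨rfl, Or.inl (S.el_even h1)⟩⟩

lemma pairE (L1 L2 : Fin 4 × ℕ) (m : ℤ) {w : ℤ} {ℓ : ℕ} {v : V} (hv : v ∈ S.EE w ℓ) :
    S.A.circ m (S.A.circ (-1) (S.el L1) (S.el L2)) v
      ∈ S.EE (w + (1 + 2 * L1.2 : ℕ) + (1 + 2 * L2.2 : ℕ) - 2 * (m + 1)) (ℓ + 2) := by
  refine S.apply_EE (S.A.circ m (S.A.circ (-1) (S.el L1) (S.el L2))) _ ?_ v hv
  intro ls h1 h2
  subst h1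
  rw [S.A.iter_eps (S.pair_el L1 L2) m (-1) (S.mon ls)]
  set w : ℤ := (lwt ls : ℤ) with hw
  set K : ℕ := lwt ls + (1 + 2 * L1.2) + (1 + 2 * L2.2) + 2 * m.natAbs + 8 with hK
  have hmon : S.mon ls ∈ S.EE w ls.length := S.mon_mem_EE rfl le_rfl
  have hsup : Function.support (fun j : ℕ => ((-1 : ℂ) ^ j * zchoose (-1) j) •
      (S.A.circ (-1 - (j : ℤ)) (S.el L1) (S.A.circ (m + (j : ℤ)) (S.el L2) (S.mon ls))
        - (ksgn L1 L2 * (-1 : ℂ) ^ (-1 : ℤ)) •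
          S.A.circ (-1 + m - (j : ℤ)) (S.el L2) (S.A.circ (j : ℤ) (S.el L1) (S.mon ls))))
      ⊆ ((Finset.range K : Finset ℕ) : Set ℕ) := by
    intro j hj
    simp only [Finset.coe_range, Set.mem_Iio]
    by_contra hcon
    push_neg at hcon
    apply hj
    have hz1 : S.A.circ (m + (j : ℤ)) (S.el L2) (S.mon ls) = 0 :=
      S.circ_EE_zero L2 (m + j) hmon (by push_cast; omega)
    have hz2 : S.A.circ (j : ℤ) (S.el L1) (S.mon ls) = 0 :=
      S.circ_EE_zero L1 (j : ℤ) hmon (by push_cast; omega)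
    simp only [hz1, hz2, map_zero, smul_zero, sub_zero]
  rw [finsum_eq_finset_sum_of_support_subset _ hsup]
  apply Submodule.sum_mem
  intro j _
  apply Submodule.smul_mem
  apply sub_mem
  · have m1 := S.circ_EE L2 (m + (j:ℤ)) hmon
    have m2 := S.circ_EE L1 (-1 - (j:ℤ)) m1
    have he : w + ((1 + 2 * L2.2 : ℕ) : ℤ) - 2 * ((m + j) + 1) + ((1 + 2 * L1.2 : ℕ) : ℤ)
        - 2 * ((-1 - (j:ℤ)) + 1)
        = w + (1 + 2 * L1.2 : ℕ) + (1 + 2 * L2.2 : ℕ) - 2 * (m + 1) := by push_cast; ring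
    rw [he] at m2
    exact S.EE_mono (by omega) m2
  · apply Submodule.smul_mem
    have m1 := S.circ_EE L1 (j:ℤ) hmon
    have m2 := S.circ_EE L2 (-1 + m - (j:ℤ)) m1
    have he : w + ((1 + 2 * L1.2 : ℕ) : ℤ) - 2 * ((j:ℤ) + 1) + ((1 + 2 * L2.2 : ℕ) : ℤ)
        - 2 * ((-1 + m - (j:ℤ)) + 1)
        = w + (1 + 2 * L1.2 : ℕ) + (1 + 2 * L2.2 : ℕ) - 2 * (m + 1) := by push_cast; ring
    rw [he] at m2
    exact S.EE_mono (by omega) m2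

end Setup
end VA

namespace VA
namespace Setup

variable {V : Type} [AddCommGroup V] [Module ℂ V] (S : Setup V)

lemma tripleE (L1 L2 L3 : Fin 4 × ℕ) (m : ℤ) {w : ℤ} {ℓ : ℕ} {v : V} (hv : v ∈ S.EE w ℓ) :
    S.A.circ m (S.A.circ (-1) (S.el L1) (S.A.circ (-1) (S.el L2) (S.el L3))) v
      ∈ S.EE (w + (1 + 2 * L1.2 : ℕ) + (1 + 2 * L2.2 : ℕ) + (1 + 2 * L3.2 : ℕ) - 2 * (m + 1))
        (ℓ + 3) := by
  refine S.apply_EE (S.A.circ m (S.A.circ (-1) (S.el L1) (S.A.circ (-1) (S.el L2) (S.el L3))))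
    _ ?_ v hv
  intro ls h1 h2
  subst h1
  obtain ⟨ε, hε⟩ := S.pair_el_wick L1 L2 L3
  rw [S.A.iter_eps hε m (-1) (S.mon ls)]
  set w : ℤ := (lwt ls : ℤ) with hw
  set K : ℕ := lwt ls + (1 + 2 * L1.2) + (1 + 2 * L2.2) + (1 + 2 * L3.2) + 2 * m.natAbs + 8
    with hK
  have hmon : S.mon ls ∈ S.EE w ls.length := S.mon_mem_EE rfl le_rfl
  have hsup : Function.support (fun j : ℕ => ((-1 : ℂ) ^ j * zchoose (-1) j) •
      (S.A.circ (-1 - (j : ℤ)) (S.el L1)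
          (S.A.circ (m + (j : ℤ)) (S.A.circ (-1) (S.el L2) (S.el L3)) (S.mon ls))
        - (ε * (-1 : ℂ) ^ (-1 : ℤ)) •
          S.A.circ (-1 + m - (j : ℤ)) (S.A.circ (-1) (S.el L2) (S.el L3))
            (S.A.circ (j : ℤ) (S.el L1) (S.mon ls))))
      ⊆ ((Finset.range K : Finset ℕ) : Set ℕ) := by
    intro j hj
    simp only [Finset.coe_range, Set.mem_Iio]
    by_contra hcon
    push_neg at hcon
    apply hj
    have hz1 : S.A.circ (m + (j : ℤ)) (S.A.circ (-1) (S.el L2) (S.el L3)) (S.mon ls) = 0 :=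
      S.EE_zero (S.pairE L2 L3 (m + j) hmon) (by push_cast; omega)
    have hz2 : S.A.circ (j : ℤ) (S.el L1) (S.mon ls) = 0 :=
      S.circ_EE_zero L1 (j : ℤ) hmon (by push_cast; omega)
    simp only [hz1, hz2, map_zero, smul_zero, sub_zero]
  rw [finsum_eq_finset_sum_of_support_subset _ hsup]
  apply Submodule.sum_mem
  intro j _
  apply Submodule.smul_mem
  apply sub_mem
  · have m1 := S.pairE L2 L3 (m + (j:ℤ)) hmon
    have m2 := S.circ_EE L1 (-1 - (j:ℤ)) m1
    have he : w + ((1 + 2 * L2.2 : ℕ) : ℤ) + ((1 + 2 * L3.2 : ℕ) : ℤ) - 2 * ((m + j) + 1)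
          + ((1 + 2 * L1.2 : ℕ) : ℤ) - 2 * ((-1 - (j:ℤ)) + 1)
        = w + (1 + 2 * L1.2 : ℕ) + (1 + 2 * L2.2 : ℕ) + (1 + 2 * L3.2 : ℕ) - 2 * (m + 1) := by
      push_cast; ring
    rw [he] at m2
    exact S.EE_mono (by omega) m2
  · apply Submodule.smul_mem
    have m1 := S.circ_EE L1 (j:ℤ) hmon
    have m2 := S.pairE L2 L3 (-1 + m - (j:ℤ)) m1
    have he : w + ((1 + 2 * L1.2 : ℕ) : ℤ) - 2 * ((j:ℤ) + 1) + ((1 + 2 * L2.2 : ℕ) : ℤ)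
          + ((1 + 2 * L3.2 : ℕ) : ℤ) - 2 * ((-1 + m - (j:ℤ)) + 1)
        = w + (1 + 2 * L1.2 : ℕ) + (1 + 2 * L2.2 : ℕ) + (1 + 2 * L3.2 : ℕ) - 2 * (m + 1) := by
      push_cast; ring
    rw [he] at m2
    exact S.EE_mono (by omega) m2

end Setup
end VA

namespace VA

/-- Order on letters: by generator, then by decreasing derivative order. -/
def rord : (Fin 4 × ℕ) → (Fin 4 × ℕ) → Prop :=
  fun p q => p.1.val < q.1.val ∨ (p.1.val = q.1.val ∧ q.2 ≤ p.2)

instance : DecidableRel rord := fun p q => by unfold rord; infer_instance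

instance : IsTotal (Fin 4 × ℕ) rord :=
  ⟨fun p q => by unfold rord; omega⟩

instance : IsTrans (Fin 4 × ℕ) rord :=
  ⟨fun p q s hpq hqs => by unfold rord at *; omega⟩

namespace Setup

variable {V : Type} [AddCommGroup V] [Module ℂ V] (S : Setup V)

lemma mon_swap (p t : List (Fin 4 × ℕ)) (L L' : Fin 4 × ℕ) :
    S.mon (p ++ L :: L' :: t) = ksgn L L' • S.mon (p ++ L' :: L :: t) := by
  induction p with
  | nil =>
    simp only [List.nil_append]
    rw [S.mon_cons, S.mon_cons, S.mon_cons, S.mon_cons]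
    exact S.wick_swap L L' (S.mon t)
  | cons a q ih =>
    simp only [List.cons_append]
    rw [S.mon_cons, S.mon_cons, ih, map_smul]

lemma mon_rep_zero (p t : List (Fin 4 × ℕ)) (L : Fin 4 × ℕ) (h : L.1.val < 2) :
    S.mon (p ++ L :: L :: t) = 0 := by
  induction p with
  | nil =>
    simp only [List.nil_append]
    rw [S.mon_cons, S.mon_cons]
    exact S.wick_sq_zero L h (S.mon t)
  | cons a q ih =>
    simp only [List.cons_append]
    rw [S.mon_cons, ih, map_zero]

lemma mon_insert (L : Fin 4 × ℕ) (s : List (Fin 4 × ℕ)) :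
    ∃ μ : ℂ, S.A.circ (-1) (S.el L) (S.mon s) = μ • S.mon (List.orderedInsert rord L s) := by
  induction s with
  | nil => exact ⟨1, by rw [one_smul]; rfl⟩
  | cons h t ih =>
    by_cases hr : rord L h
    · exact ⟨1, by rw [one_smul, List.orderedInsert, if_pos hr]; rfl⟩
    · obtain ⟨μ, hμ⟩ := ih
      refine ⟨ksgn L h * μ, ?_⟩
      rw [List.orderedInsert, if_neg hr]
      have h1 : S.A.circ (-1) (S.el L) (S.mon (h :: t))
          = ksgn L h • S.A.circ (-1) (S.el h) (S.A.circ (-1) (S.el L) (S.mon t)) := by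
        rw [S.mon_cons]
        exact S.wick_swap L h (S.mon t)
      rw [h1, hμ, map_smul, S.mon_cons, smul_smul]

lemma mon_sort (ls : List (Fin 4 × ℕ)) :
    ∃ μ : ℂ, S.mon ls = μ • S.mon (List.insertionSort rord ls) := by
  induction ls with
  | nil => exact ⟨1, by rw [one_smul]; rfl⟩
  | cons L t ih =>
    obtain ⟨μ, hμ⟩ := ih
    obtain ⟨μ2, hμ2⟩ := S.mon_insert L (List.insertionSort rord t)
    refine ⟨μ * μ2, ?_⟩
    rw [List.insertionSort_cons, S.mon_cons, hμ, map_smul, hμ2, smul_smul]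

end Setup
end VA

namespace VA
namespace Setup

variable {V : Type} [AddCommGroup V] [Module ℂ V] (S : Setup V)

lemma sorted_decomp : ∀ (ls : List (Fin 4 × ℕ)), ls.Pairwise rord →
    ∃ ns ms ss ts : List ℕ,
      ls = ns.map (fun n => ((0 : Fin 4), n)) ++ ms.map (fun n => ((1 : Fin 4), n))
        ++ ss.map (fun n => ((2 : Fin 4), n)) ++ ts.map (fun n => ((3 : Fin 4), n))
      ∧ List.Chain' (· ≥ ·) ns ∧ List.Chain' (· ≥ ·) ms ∧ List.Chain' (· ≥ ·) ss
      ∧ List.Chain' (· ≥ ·) ts := by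
  intro ls
  induction ls with
  | nil => exact fun _ => ⟨[], [], [], [], rfl, List.isChain_nil, List.isChain_nil,
      List.isChain_nil, List.isChain_nil⟩
  | cons L t ih =>
    intro hs
    obtain ⟨h1, h2⟩ := List.pairwise_cons.mp hs
    obtain ⟨ns, ms, ss, ts, hteq, cn, cm, cs, ct⟩ := ih h2
    obtain ⟨i, n⟩ := L
    have hmem0 : ∀ y ∈ ns, ((0 : Fin 4), y) ∈ t := by
      intro y hy
      rw [hteq]
      simp only [List.mem_append, List.mem_map]
      exact Or.inl (Or.inl (Or.inl ⟨y, hy, rfl⟩))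
    have hmem1 : ∀ y ∈ ms, ((1 : Fin 4), y) ∈ t := by
      intro y hy
      rw [hteq]
      simp only [List.mem_append, List.mem_map]
      exact Or.inl (Or.inl (Or.inr ⟨y, hy, rfl⟩))
    have hmem2 : ∀ y ∈ ss, ((2 : Fin 4), y) ∈ t := by
      intro y hy
      rw [hteq]
      simp only [List.mem_append, List.mem_map]
      exact Or.inl (Or.inr ⟨y, hy, rfl⟩)
    have hmem3 : ∀ y ∈ ts, ((3 : Fin 4), y) ∈ t := by
      intro y hy
      rw [hteq]
      simp only [List.mem_append, List.mem_map]
      exact Or.inr ⟨y, hy, rfl⟩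
    fin_cases i
    · -- i = 0
      refine ⟨n :: ns, ms, ss, ts, ?_, ?_, cm, cs, ct⟩
      · rw [hteq]; simp
      · refine List.isChain_cons.mpr ⟨?_, cn⟩
        intro y hy
        have := h1 _ (hmem0 y (List.mem_of_mem_head? hy))
        unfold rord at this
        simpa using this
    · -- i = 1
      rcases ns with _ | ⟨y, ns'⟩
      · refine ⟨[], n :: ms, ss, ts, ?_, List.isChain_nil, ?_, cs, ct⟩
        · rw [hteq]; simp
        · refine List.isChain_cons.mpr ⟨?_, cm⟩
          intro y hy
          have := h1 _ (hmem1 y (List.mem_of_mem_head? hy))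
          unfold rord at this
          simpa using this
      · exfalso
        have := h1 _ (hmem0 y ((List.mem_cons_self (a := y) (l := ns'))))
        unfold rord at this
        simpa using this
    · -- i = 2
      rcases ns with _ | ⟨y, ns'⟩
      · rcases ms with _ | ⟨y, ms'⟩
        · refine ⟨[], [], n :: ss, ts, ?_, List.isChain_nil, List.isChain_nil, ?_, ct⟩
          · rw [hteq]; simp
          · refine List.isChain_cons.mpr ⟨?_, cs⟩
            intro y hy
            have := h1 _ (hmem2 y (List.mem_of_mem_head? hy))
            unfold rord at this
            simpa using this
        · exfalso
          have := h1 _ (hmem1 y ((List.mem_cons_self (a := y) (l := ms'))))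
          unfold rord at this
          simpa using this
      · exfalso
        have := h1 _ (hmem0 y ((List.mem_cons_self (a := y) (l := ns'))))
        unfold rord at this
        simpa using this
    · -- i = 3
      rcases ns with _ | ⟨y, ns'⟩
      · rcases ms with _ | ⟨y, ms'⟩
        · rcases ss with _ | ⟨y, ss'⟩
          · refine ⟨[], [], [], n :: ts, ?_, List.isChain_nil, List.isChain_nil,
              List.isChain_nil, ?_⟩
            · rw [hteq]; simp
            · refine List.isChain_cons.mpr ⟨?_, ct⟩
              intro y hy
              have := h1 _ (hmem3 y (List.mem_of_mem_head? hy))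
              unfold rord at this
              rcases this with hlt | heq
              · exact absurd hlt (Nat.lt_irrefl 3)
              · exact heq.2
          · exfalso
            have := h1 _ (hmem2 y ((List.mem_cons_self (a := y) (l := ss'))))
            unfold rord at this
            simpa using this
        · exfalso
          have := h1 _ (hmem1 y ((List.mem_cons_self (a := y) (l := ms'))))
          unfold rord at this
          simpa using this
      · exfalso
        have := h1 _ (hmem0 y ((List.mem_cons_self (a := y) (l := ns'))))
        unfold rord at this
        simpa using this

end Setup
end VA

namespace VA
namespace Setup

variable {V : Type} [AddCommGroup V] [Module ℂ V] (S : Setup V)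

lemma mon_std (ns ms ss ts : List ℕ) :
    S.mon (ns.map (fun n => ((0 : Fin 4), n)) ++ ms.map (fun n => ((1 : Fin 4), n))
        ++ ss.map (fun n => ((2 : Fin 4), n)) ++ ts.map (fun n => ((3 : Fin 4), n)))
      = VA.stdMon S.A S.b S.c S.β S.γ ns ms ss ts := by
  rw [mon, VA.stdMon]
  congr 1
  simp only [List.map_append, List.map_map]
  rfl

lemma chain_strict_or_rep : ∀ (l : List ℕ), List.Chain' (· ≥ ·) l →
    List.Chain' (· > ·) l ∨ ∃ p a q, l = p ++ a :: a :: q := by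
  intro l
  induction l with
  | nil => exact fun _ => Or.inl List.isChain_nil
  | cons a t ih =>
    intro h
    rcases t with _ | ⟨b, t'⟩
    · exact Or.inl (List.isChain_singleton a)
    · have hab : b ≤ a := (List.isChain_cons_cons.mp h).1
      have ht := (List.isChain_cons_cons.mp h).2
      rcases Nat.eq_or_lt_of_le hab with heq | hlt
    -- b = a or b < a
      · exact Or.inr ⟨[], a, t', by rw [heq]; rfl⟩
      · rcases ih ht with hc | ⟨p, x, q, hpq⟩
        · exact Or.inl (List.isChain_cons_cons.mpr ⟨hlt, hc⟩)
        · exact Or.inr ⟨a :: p, x, q, by rw [hpq]; rfl⟩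

lemma lwt_eq (ls : List (Fin 4 × ℕ)) :
    lwt ls = ls.length + 2 * (ls.map Prod.snd).sum := by
  induction ls with
  | nil => rfl
  | cons L t ih => rw [lwt_cons, ih]; simp; omega

lemma exists_deriv (ls : List (Fin 4 × ℕ)) (h : ls.length < lwt ls) :
    ∃ L ∈ ls, 0 < L.2 := by
  by_contra hcon
  push_neg at hcon
  have hz : (ls.map Prod.snd).sum = 0 := by
    apply List.sum_eq_zero
    intro x hx
    obtain ⟨L, hL, hLx⟩ := List.mem_map.mp hx
    have := hcon L hL
    omega
  rw [lwt_eq, hz] at h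
  omega

/-- The span of the derivative monomials. -/
noncomputable def QQ : Submodule ℂ V := Submodule.span ℂ (VA.DSet S.A S.b S.c S.β S.γ)

lemma mon_mem_QQ (ls : List (Fin 4 × ℕ)) (hder : ∃ L ∈ ls, 0 < L.2) : S.mon ls ∈ S.QQ := by
  obtain ⟨μ, hμ⟩ := S.mon_sort ls
  rw [hμ]
  apply Submodule.smul_mem
  set ls' := List.insertionSort rord ls with hls'
  have hsorted : ls'.Pairwise rord := List.pairwise_insertionSort rord ls
  have hperm : ls'.Perm ls := List.perm_insertionSort rord ls
  have hder' : ∃ L ∈ ls', 0 < L.2 := by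
    obtain ⟨L, hL, h0⟩ := hder
    exact ⟨L, hperm.mem_iff.mpr hL, h0⟩
  obtain ⟨ns, ms, ss, ts, heq, cn, cm, cs, ct⟩ := sorted_decomp ls' hsorted
  rcases chain_strict_or_rep ns cn with hn | ⟨p, x, q, hpx⟩
  swap
  · have hre : ls' = (p.map (fun n => ((0 : Fin 4), n)))
        ++ (((0 : Fin 4), x) :: ((0 : Fin 4), x) ::
          (q.map (fun n => ((0 : Fin 4), n)) ++ ms.map (fun n => ((1 : Fin 4), n))
            ++ ss.map (fun n => ((2 : Fin 4), n)) ++ ts.map (fun n => ((3 : Fin 4), n)))) := by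
      rw [heq, hpx]
      simp [List.append_assoc]
    rw [hre, S.mon_rep_zero _ _ _ (by norm_num)]
    exact zero_mem _
  rcases chain_strict_or_rep ms cm with hm | ⟨p, x, q, hpx⟩
  swap
  · have hre : ls' = (ns.map (fun n => ((0 : Fin 4), n)) ++ p.map (fun n => ((1 : Fin 4), n)))
        ++ (((1 : Fin 4), x) :: ((1 : Fin 4), x) ::
          (q.map (fun n => ((1 : Fin 4), n))
            ++ ss.map (fun n => ((2 : Fin 4), n)) ++ ts.map (fun n => ((3 : Fin 4), n)))) := by
      rw [heq, hpx]
      simp [List.append_assoc]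
    rw [hre, S.mon_rep_zero _ _ _ (by norm_num)]
    exact zero_mem _
  apply Submodule.subset_span
  refine ⟨ns, ms, ss, ts, hn, hm, cs, ct, ?_, ?_⟩
  · obtain ⟨L, hL, h0⟩ := hder'
    rw [heq] at hL
    simp only [List.mem_append, List.mem_map] at hL
    simp only [List.mem_append]
    rcases hL with ((⟨n, hn', hLn⟩ | ⟨n, hn', hLn⟩) | ⟨n, hn', hLn⟩) | ⟨n, hn', hLn⟩
    · exact ⟨L.2, Or.inl (Or.inl (Or.inl (by rw [← hLn]; exact hn'))), h0⟩
    · exact ⟨L.2, Or.inl (Or.inl (Or.inr (by rw [← hLn]; exact hn'))), h0⟩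
    · exact ⟨L.2, Or.inl (Or.inr (by rw [← hLn]; exact hn')), h0⟩
    · exact ⟨L.2, Or.inr (by rw [← hLn]; exact hn'), h0⟩
  · rw [heq, S.mon_std]

lemma EE_le_QQ {w : ℤ} {ℓ : ℕ} (h : (ℓ:ℤ) < w) : S.EE w ℓ ≤ S.QQ := by
  apply Submodule.span_le.mpr
  rintro v ⟨ls, h1, h2, h3⟩
  subst h3
  exact S.mon_mem_QQ ls (exists_deriv ls (by omega))

end Setup
end VA

namespace VA
namespace Setup

variable {V : Type} [AddCommGroup V] [Module ℂ V] (S : Setup V)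

lemma circ_pos_EE' (L : Fin 4 × ℕ) (m : ℤ) (hm : 0 ≤ m) {w : ℤ} {ℓ : ℕ} {v : V}
    (hv : v ∈ S.EE w ℓ) :
    S.A.circ m (S.el L) v ∈ S.EE (w + (1 + 2 * L.2 : ℕ) - 2 * (m + 1)) ℓ := by
  have h := S.circ_pos_EE L m.toNat hv
  rw [show ((m.toNat : ℕ) : ℤ) = m by omega] at h
  exact h

lemma pairE_pos (L1 L2 : Fin 4 × ℕ) (m : ℤ) (hm : 0 ≤ m) {w : ℤ} {ℓ : ℕ} {v : V}
    (hv : v ∈ S.EE w ℓ) :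
    S.A.circ m (S.A.circ (-1) (S.el L1) (S.el L2)) v
      ∈ S.EE (w + (1 + 2 * L1.2 : ℕ) + (1 + 2 * L2.2 : ℕ) - 2 * (m + 1)) (ℓ + 1) := by
  refine S.apply_EE (S.A.circ m (S.A.circ (-1) (S.el L1) (S.el L2))) _ ?_ v hv
  intro ls h1 h2
  subst h1
  rw [S.A.iter_eps (S.pair_el L1 L2) m (-1) (S.mon ls)]
  set w : ℤ := (lwt ls : ℤ) with hw
  set K : ℕ := lwt ls + (1 + 2 * L1.2) + (1 + 2 * L2.2) + 2 * m.natAbs + 8 with hK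
  have hmon : S.mon ls ∈ S.EE w ls.length := S.mon_mem_EE rfl le_rfl
  have hsup : Function.support (fun j : ℕ => ((-1 : ℂ) ^ j * zchoose (-1) j) •
      (S.A.circ (-1 - (j : ℤ)) (S.el L1) (S.A.circ (m + (j : ℤ)) (S.el L2) (S.mon ls))
        - (ksgn L1 L2 * (-1 : ℂ) ^ (-1 : ℤ)) •
          S.A.circ (-1 + m - (j : ℤ)) (S.el L2) (S.A.circ (j : ℤ) (S.el L1) (S.mon ls))))
      ⊆ ((Finset.range K : Finset ℕ) : Set ℕ) := by
    intro j hj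
    simp only [Finset.coe_range, Set.mem_Iio]
    by_contra hcon
    push_neg at hcon
    apply hj
    have hz1 : S.A.circ (m + (j : ℤ)) (S.el L2) (S.mon ls) = 0 :=
      S.circ_EE_zero L2 (m + j) hmon (by push_cast; omega)
    have hz2 : S.A.circ (j : ℤ) (S.el L1) (S.mon ls) = 0 :=
      S.circ_EE_zero L1 (j : ℤ) hmon (by push_cast; omega)
    simp only [hz1, hz2, map_zero, smul_zero, sub_zero]
  rw [finsum_eq_finset_sum_of_support_subset _ hsup]
  apply Submodule.sum_mem
  intro j _
  apply Submodule.smul_mem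
  apply sub_mem
  · have m1 := S.circ_pos_EE' L2 (m + (j:ℤ)) (by omega) hmon
    have m2 := S.circ_EE L1 (-1 - (j:ℤ)) m1
    have he : w + ((1 + 2 * L2.2 : ℕ) : ℤ) - 2 * ((m + j) + 1) + ((1 + 2 * L1.2 : ℕ) : ℤ)
        - 2 * ((-1 - (j:ℤ)) + 1)
        = w + (1 + 2 * L1.2 : ℕ) + (1 + 2 * L2.2 : ℕ) - 2 * (m + 1) := by push_cast; ring
    rw [he] at m2
    exact S.EE_mono (by omega) m2
  · apply Submodule.smul_mem
    have m1 := S.circ_pos_EE' L1 (j:ℤ) (by omega) hmon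
    have m2 := S.circ_EE L2 (-1 + m - (j:ℤ)) m1
    have he : w + ((1 + 2 * L1.2 : ℕ) : ℤ) - 2 * ((j:ℤ) + 1) + ((1 + 2 * L2.2 : ℕ) : ℤ)
        - 2 * ((-1 + m - (j:ℤ)) + 1)
        = w + (1 + 2 * L1.2 : ℕ) + (1 + 2 * L2.2 : ℕ) - 2 * (m + 1) := by push_cast; ring
    rw [he] at m2
    exact S.EE_mono (by omega) m2

end Setup
end VA

namespace VA
namespace Setup

variable {V : Type} [AddCommGroup V] [Module ℂ V] (S : Setup V)

lemma corr_pair (L2 L3 : Fin 4 × ℕ) (ls : List (Fin 4 × ℕ)) :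
    S.A.circ (-1) (S.A.circ (-1) (S.el L2) (S.el L3)) (S.mon ls)
      - S.A.circ (-1) (S.el L2) (S.A.circ (-1) (S.el L3) (S.mon ls))
      ∈ S.EE ((lwt ls : ℤ) + (1 + 2 * L2.2 : ℕ) + (1 + 2 * L3.2 : ℕ)) (ls.length + 1) := by
  rw [S.A.iter_eps (S.pair_el L2 L3) (-1) (-1) (S.mon ls)]
  set w : ℤ := (lwt ls : ℤ) with hw
  set K : ℕ := lwt ls + (1 + 2 * L2.2) + (1 + 2 * L3.2) + 8 with hK
  have hmon : S.mon ls ∈ S.EE w ls.length := S.mon_mem_EE rfl le_rfl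
  set f : ℕ → V := fun j => ((-1 : ℂ) ^ j * zchoose (-1) j) •
      (S.A.circ (-1 - (j : ℤ)) (S.el L2) (S.A.circ (-1 + (j : ℤ)) (S.el L3) (S.mon ls))
        - (ksgn L2 L3 * (-1 : ℂ) ^ (-1 : ℤ)) •
          S.A.circ (-1 + -1 - (j : ℤ)) (S.el L3) (S.A.circ (j : ℤ) (S.el L2) (S.mon ls)))
    with hf
  have hsup : Function.support f ⊆ ((Finset.range (K + 1) : Finset ℕ) : Set ℕ) := by
    intro j hj
    simp only [Finset.coe_range, Set.mem_Iio]
    by_contra hcon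
    push_neg at hcon
    apply hj
    have hz1 : S.A.circ (-1 + (j : ℤ)) (S.el L3) (S.mon ls) = 0 :=
      S.circ_EE_zero L3 (-1 + j) hmon (by push_cast; omega)
    have hz2 : S.A.circ (j : ℤ) (S.el L2) (S.mon ls) = 0 :=
      S.circ_EE_zero L2 (j : ℤ) hmon (by push_cast; omega)
    simp only [hf, hz1, hz2, map_zero, smul_zero, sub_zero]
  rw [finsum_eq_finset_sum_of_support_subset f hsup, Finset.sum_range_succ']
  have hf0 : f 0 = S.A.circ (-1) (S.el L2) (S.A.circ (-1) (S.el L3) (S.mon ls))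
      - (ksgn L2 L3 * (-1 : ℂ) ^ (-1 : ℤ)) •
        S.A.circ (-2) (S.el L3) (S.A.circ 0 (S.el L2) (S.mon ls)) := by
    rw [hf]
    norm_num [zchoose_zero]
  rw [hf0]
  have hre : (∑ i ∈ Finset.range K, f (i + 1))
        + (S.A.circ (-1) (S.el L2) (S.A.circ (-1) (S.el L3) (S.mon ls))
          - (ksgn L2 L3 * (-1 : ℂ) ^ (-1 : ℤ)) •
            S.A.circ (-2) (S.el L3) (S.A.circ 0 (S.el L2) (S.mon ls)))
        - S.A.circ (-1) (S.el L2) (S.A.circ (-1) (S.el L3) (S.mon ls))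
      = (∑ i ∈ Finset.range K, f (i + 1))
        - (ksgn L2 L3 * (-1 : ℂ) ^ (-1 : ℤ)) •
          S.A.circ (-2) (S.el L3) (S.A.circ 0 (S.el L2) (S.mon ls)) := by abel
  rw [hre]
  apply sub_mem
  · apply Submodule.sum_mem
    intro i _
    have hfi : f (i + 1) = ((-1 : ℂ) ^ (i+1) * zchoose (-1) (i+1)) •
        (S.A.circ (-1 - ((i+1 : ℕ) : ℤ)) (S.el L2)
            (S.A.circ (-1 + ((i+1 : ℕ) : ℤ)) (S.el L3) (S.mon ls))
          - (ksgn L2 L3 * (-1 : ℂ) ^ (-1 : ℤ)) •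
            S.A.circ (-1 + -1 - ((i+1 : ℕ) : ℤ)) (S.el L3)
              (S.A.circ ((i+1 : ℕ) : ℤ) (S.el L2) (S.mon ls))) := by rw [hf]
    rw [hfi]
    apply Submodule.smul_mem
    apply sub_mem
    · have m1 := S.circ_pos_EE' L3 (-1 + ((i+1 : ℕ) : ℤ)) (by push_cast; omega) hmon
      have m2 := S.circ_EE L2 (-1 - ((i+1 : ℕ) : ℤ)) m1
      have he : w + ((1 + 2 * L3.2 : ℕ) : ℤ) - 2 * ((-1 + ((i+1 : ℕ) : ℤ)) + 1)
            + ((1 + 2 * L2.2 : ℕ) : ℤ) - 2 * ((-1 - ((i+1 : ℕ) : ℤ)) + 1)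
          = w + (1 + 2 * L2.2 : ℕ) + (1 + 2 * L3.2 : ℕ) := by push_cast; ring
      rw [he] at m2
      exact m2
    · apply Submodule.smul_mem
      have m1 := S.circ_pos_EE' L2 ((i+1 : ℕ) : ℤ) (by positivity) hmon
      have m2 := S.circ_EE L3 (-1 + -1 - ((i+1 : ℕ) : ℤ)) m1
      have he : w + ((1 + 2 * L2.2 : ℕ) : ℤ) - 2 * (((i+1 : ℕ) : ℤ) + 1)
            + ((1 + 2 * L3.2 : ℕ) : ℤ) - 2 * ((-1 + -1 - ((i+1 : ℕ) : ℤ)) + 1)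
          = w + (1 + 2 * L2.2 : ℕ) + (1 + 2 * L3.2 : ℕ) := by push_cast; ring
      rw [he] at m2
      exact m2
  · apply Submodule.smul_mem
    have m1 := S.circ_pos_EE' L2 0 le_rfl hmon
    have m2 := S.circ_EE L3 (-2) m1
    have he : w + ((1 + 2 * L2.2 : ℕ) : ℤ) - 2 * ((0:ℤ) + 1)
          + ((1 + 2 * L3.2 : ℕ) : ℤ) - 2 * ((-2 + 1 : ℤ))
        = w + (1 + 2 * L2.2 : ℕ) + (1 + 2 * L3.2 : ℕ) := by push_cast; ring
    rw [he] at m2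
    exact S.EE_mono (by omega) m2

end Setup
end VA

namespace VA
namespace Setup

variable {V : Type} [AddCommGroup V] [Module ℂ V] (S : Setup V)

lemma corr_triple (L1 L2 L3 : Fin 4 × ℕ) (ls : List (Fin 4 × ℕ)) :
    S.A.circ (-1) (S.A.circ (-1) (S.el L1) (S.A.circ (-1) (S.el L2) (S.el L3))) (S.mon ls)
      - S.A.circ (-1) (S.el L1)
          (S.A.circ (-1) (S.A.circ (-1) (S.el L2) (S.el L3)) (S.mon ls))
      ∈ S.EE ((lwt ls : ℤ) + (1 + 2 * L1.2 : ℕ) + (1 + 2 * L2.2 : ℕ) + (1 + 2 * L3.2 : ℕ))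
        (ls.length + 2) := by
  obtain ⟨ε, hε⟩ := S.pair_el_wick L1 L2 L3
  rw [S.A.iter_eps hε (-1) (-1) (S.mon ls)]
  set w : ℤ := (lwt ls : ℤ) with hw
  set K : ℕ := lwt ls + (1 + 2 * L1.2) + (1 + 2 * L2.2) + (1 + 2 * L3.2) + 8 with hK
  have hmon : S.mon ls ∈ S.EE w ls.length := S.mon_mem_EE rfl le_rfl
  set f : ℕ → V := fun j => ((-1 : ℂ) ^ j * zchoose (-1) j) •
      (S.A.circ (-1 - (j : ℤ)) (S.el L1)
          (S.A.circ (-1 + (j : ℤ)) (S.A.circ (-1) (S.el L2) (S.el L3)) (S.mon ls))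
        - (ε * (-1 : ℂ) ^ (-1 : ℤ)) •
          S.A.circ (-1 + -1 - (j : ℤ)) (S.A.circ (-1) (S.el L2) (S.el L3))
            (S.A.circ (j : ℤ) (S.el L1) (S.mon ls)))
    with hf
  have hsup : Function.support f ⊆ ((Finset.range (K + 1) : Finset ℕ) : Set ℕ) := by
    intro j hj
    simp only [Finset.coe_range, Set.mem_Iio]
    by_contra hcon
    push_neg at hcon
    apply hj
    have hz1 : S.A.circ (-1 + (j : ℤ)) (S.A.circ (-1) (S.el L2) (S.el L3)) (S.mon ls) = 0 :=
      S.EE_zero (S.pairE L2 L3 (-1 + j) hmon) (by push_cast; omega)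
    have hz2 : S.A.circ (j : ℤ) (S.el L1) (S.mon ls) = 0 :=
      S.circ_EE_zero L1 (j : ℤ) hmon (by push_cast; omega)
    simp only [hf, hz1, hz2, map_zero, smul_zero, sub_zero]
  rw [finsum_eq_finset_sum_of_support_subset f hsup, Finset.sum_range_succ']
  have hf0 : f 0 = S.A.circ (-1) (S.el L1)
        (S.A.circ (-1) (S.A.circ (-1) (S.el L2) (S.el L3)) (S.mon ls))
      - (ε * (-1 : ℂ) ^ (-1 : ℤ)) •
        S.A.circ (-2) (S.A.circ (-1) (S.el L2) (S.el L3))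
          (S.A.circ 0 (S.el L1) (S.mon ls)) := by
    rw [hf]
    norm_num [zchoose_zero]
  rw [hf0]
  have hre : (∑ i ∈ Finset.range K, f (i + 1))
        + (S.A.circ (-1) (S.el L1)
            (S.A.circ (-1) (S.A.circ (-1) (S.el L2) (S.el L3)) (S.mon ls))
          - (ε * (-1 : ℂ) ^ (-1 : ℤ)) •
            S.A.circ (-2) (S.A.circ (-1) (S.el L2) (S.el L3))
              (S.A.circ 0 (S.el L1) (S.mon ls)))
        - S.A.circ (-1) (S.el L1)
            (S.A.circ (-1) (S.A.circ (-1) (S.el L2) (S.el L3)) (S.mon ls))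
      = (∑ i ∈ Finset.range K, f (i + 1))
        - (ε * (-1 : ℂ) ^ (-1 : ℤ)) •
          S.A.circ (-2) (S.A.circ (-1) (S.el L2) (S.el L3))
            (S.A.circ 0 (S.el L1) (S.mon ls)) := by abel
  rw [hre]
  apply sub_mem
  · apply Submodule.sum_mem
    intro i _
    have hfi : f (i + 1) = ((-1 : ℂ) ^ (i+1) * zchoose (-1) (i+1)) •
        (S.A.circ (-1 - ((i+1 : ℕ) : ℤ)) (S.el L1)
            (S.A.circ (-1 + ((i+1 : ℕ) : ℤ)) (S.A.circ (-1) (S.el L2) (S.el L3)) (S.mon ls))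
          - (ε * (-1 : ℂ) ^ (-1 : ℤ)) •
            S.A.circ (-1 + -1 - ((i+1 : ℕ) : ℤ)) (S.A.circ (-1) (S.el L2) (S.el L3))
              (S.A.circ ((i+1 : ℕ) : ℤ) (S.el L1) (S.mon ls))) := by rw [hf]
    rw [hfi]
    apply Submodule.smul_mem
    apply sub_mem
    · have m1 := S.pairE_pos L2 L3 (-1 + ((i+1 : ℕ) : ℤ)) (by push_cast; omega) hmon
      have m2 := S.circ_EE L1 (-1 - ((i+1 : ℕ) : ℤ)) m1
      have he : w + ((1 + 2 * L2.2 : ℕ) : ℤ) + ((1 + 2 * L3.2 : ℕ) : ℤ)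
            - 2 * ((-1 + ((i+1 : ℕ) : ℤ)) + 1)
            + ((1 + 2 * L1.2 : ℕ) : ℤ) - 2 * ((-1 - ((i+1 : ℕ) : ℤ)) + 1)
          = w + (1 + 2 * L1.2 : ℕ) + (1 + 2 * L2.2 : ℕ) + (1 + 2 * L3.2 : ℕ) := by
        push_cast; ring
      rw [he] at m2
      exact m2
    · apply Submodule.smul_mem
      have m1 := S.circ_pos_EE' L1 ((i+1 : ℕ) : ℤ) (by positivity) hmon
      have m2 := S.pairE L2 L3 (-1 + -1 - ((i+1 : ℕ) : ℤ)) m1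
      have he : w + ((1 + 2 * L1.2 : ℕ) : ℤ) - 2 * (((i+1 : ℕ) : ℤ) + 1)
            + ((1 + 2 * L2.2 : ℕ) : ℤ) + ((1 + 2 * L3.2 : ℕ) : ℤ)
            - 2 * ((-1 + -1 - ((i+1 : ℕ) : ℤ)) + 1)
          = w + (1 + 2 * L1.2 : ℕ) + (1 + 2 * L2.2 : ℕ) + (1 + 2 * L3.2 : ℕ) := by
        push_cast; ring
      rw [he] at m2
      exact S.EE_mono (by omega) m2
  · apply Submodule.smul_mem
    have m1 := S.circ_pos_EE' L1 0 le_rfl hmon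
    have m2 := S.pairE L2 L3 (-2) m1
    have he : w + ((1 + 2 * L1.2 : ℕ) : ℤ) - 2 * ((0:ℤ) + 1)
          + ((1 + 2 * L2.2 : ℕ) : ℤ) + ((1 + 2 * L3.2 : ℕ) : ℤ) - 2 * ((-2 + 1 : ℤ))
        = w + (1 + 2 * L1.2 : ℕ) + (1 + 2 * L2.2 : ℕ) + (1 + 2 * L3.2 : ℕ) := by
      push_cast; ring
    rw [he] at m2
    exact S.EE_mono (by omega) m2

end Setup
end VA

namespace VA
namespace Setup

variable {V : Type} [AddCommGroup V] [Module ℂ V] (S : Setup V)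

/-- The element `x = :βγγ: - :bcγ: + (3/2)∂γ`, in letter form. -/
noncomputable def xv : V :=
  S.A.circ (-1) (S.el (2, 0)) (S.A.circ (-1) (S.el (3, 0)) (S.el (3, 0)))
    - S.A.circ (-1) (S.el (0, 0)) (S.A.circ (-1) (S.el (1, 0)) (S.el (3, 0)))
    + (3 / 2 : ℂ) • S.el (3, 1)

lemma xv_eq : S.xv
    = S.A.wick S.β (S.A.wick S.γ S.γ) - S.A.wick S.b (S.A.wick S.c S.γ)
      + (3 / 2 : ℂ) • S.A.D S.γ := rfl

lemma wickx_expand (u : V) :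
    S.A.circ (-1) S.xv u
      = S.A.circ (-1) (S.A.circ (-1) (S.el (2, 0)) (S.A.circ (-1) (S.el (3, 0)) (S.el (3, 0)))) u
        - S.A.circ (-1) (S.A.circ (-1) (S.el (0, 0)) (S.A.circ (-1) (S.el (1, 0)) (S.el (3, 0)))) u
        + (3 / 2 : ℂ) • S.A.circ (-1) (S.el (3, 1)) u := by
  rw [xv, map_add, map_sub, map_smul]
  rfl

/-- Modulo `Q`, `x ∘₋₁` acts on a letter monomial as left multiplication by
`βγγ` minus left multiplication by `bcγ`. -/
lemma wickx_mon (ls : List (Fin 4 × ℕ)) :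
    S.A.circ (-1) S.xv (S.mon ls)
      - (S.A.circ (-1) (S.el (2, 0)) (S.A.circ (-1) (S.el (3, 0))
            (S.A.circ (-1) (S.el (3, 0)) (S.mon ls)))
        - S.A.circ (-1) (S.el (0, 0)) (S.A.circ (-1) (S.el (1, 0))
            (S.A.circ (-1) (S.el (3, 0)) (S.mon ls))))
      ∈ S.QQ := by
  rw [S.wickx_expand]
  have hlen := length_le_lwt ls
  set w : ℤ := (lwt ls : ℤ) with hw
  have hmon : S.mon ls ∈ S.EE w ls.length := S.mon_mem_EE rfl le_rfl
  have hQ1 : S.A.circ (-1) (S.A.circ (-1) (S.el (2,0)) (S.A.circ (-1) (S.el (3,0)) (S.el (3,0))))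
        (S.mon ls)
      - S.A.circ (-1) (S.el (2,0))
          (S.A.circ (-1) (S.A.circ (-1) (S.el (3,0)) (S.el (3,0))) (S.mon ls)) ∈ S.QQ := by
    refine S.EE_le_QQ ?_ (S.corr_triple (2,0) (3,0) (3,0) ls)
    push_cast
    omega
  have hQ2 : S.A.circ (-1) (S.el (2,0))
        (S.A.circ (-1) (S.A.circ (-1) (S.el (3,0)) (S.el (3,0))) (S.mon ls)
          - S.A.circ (-1) (S.el (3,0)) (S.A.circ (-1) (S.el (3,0)) (S.mon ls))) ∈ S.QQ := by
    have hp := S.corr_pair (3,0) (3,0) ls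
    have hm := S.wick_EE (2,0) hp
    refine S.EE_le_QQ ?_ hm
    push_cast
    omega
  have hQ3 : S.A.circ (-1) (S.A.circ (-1) (S.el (0,0)) (S.A.circ (-1) (S.el (1,0)) (S.el (3,0))))
        (S.mon ls)
      - S.A.circ (-1) (S.el (0,0))
          (S.A.circ (-1) (S.A.circ (-1) (S.el (1,0)) (S.el (3,0))) (S.mon ls)) ∈ S.QQ := by
    refine S.EE_le_QQ ?_ (S.corr_triple (0,0) (1,0) (3,0) ls)
    push_cast
    omega
  have hQ4 : S.A.circ (-1) (S.el (0,0))
        (S.A.circ (-1) (S.A.circ (-1) (S.el (1,0)) (S.el (3,0))) (S.mon ls)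
          - S.A.circ (-1) (S.el (1,0)) (S.A.circ (-1) (S.el (3,0)) (S.mon ls))) ∈ S.QQ := by
    have hp := S.corr_pair (1,0) (3,0) ls
    have hm := S.wick_EE (0,0) hp
    refine S.EE_le_QQ ?_ hm
    push_cast
    omega
  have hQ5 : (3 / 2 : ℂ) • S.A.circ (-1) (S.el (3,1)) (S.mon ls) ∈ S.QQ := by
    apply Submodule.smul_mem
    refine S.EE_le_QQ ?_ (S.wick_EE (3,1) hmon)
    push_cast
    omega
  rw [map_sub] at hQ2
  rw [map_sub] at hQ4
  have hfinal := add_mem (sub_mem (add_mem hQ1 hQ2) (add_mem hQ3 hQ4)) hQ5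
  convert hfinal using 1
  abel

lemma wickx_EE {w : ℤ} {ℓ : ℕ} {v : V} (hv : v ∈ S.EE w ℓ) :
    S.A.circ (-1) S.xv v ∈ S.EE (w + 3) (ℓ + 3) := by
  rw [S.wickx_expand]
  apply add_mem
  · apply sub_mem
    · have h := S.tripleE (2,0) (3,0) (3,0) (-1) hv
      have he : w + ((1 + 2 * 0 : ℕ) : ℤ) + ((1 + 2 * 0 : ℕ) : ℤ) + ((1 + 2 * 0 : ℕ) : ℤ)
          - 2 * ((-1 : ℤ) + 1) = w + 3 := by push_cast; ring
      rw [he] at h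
      exact h
    · have h := S.tripleE (0,0) (1,0) (3,0) (-1) hv
      have he : w + ((1 + 2 * 0 : ℕ) : ℤ) + ((1 + 2 * 0 : ℕ) : ℤ) + ((1 + 2 * 0 : ℕ) : ℤ)
          - 2 * ((-1 : ℤ) + 1) = w + 3 := by push_cast; ring
      rw [he] at h
      exact h
  · apply Submodule.smul_mem
    have h := S.wick_EE (3,1) hv
    have he : w + ((1 + 2 * 1 : ℕ) : ℤ) = w + 3 := by push_cast; ring
    rw [he] at h
    exact S.EE_mono (by omega) h

lemma wickx_QQ {v : V} (hv : v ∈ S.QQ) : S.A.circ (-1) S.xv v ∈ S.QQ := by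
  have hle : S.QQ ≤ S.QQ.comap (S.A.circ (-1) S.xv) := by
    apply Submodule.span_le.mpr
    rintro u ⟨ns, ms, ss, ts, cn, cm, cs, ct, ⟨k, hk, hk0⟩, hu⟩
    subst hu
    set ls : List (Fin 4 × ℕ) := ns.map (fun n => ((0 : Fin 4), n))
        ++ ms.map (fun n => ((1 : Fin 4), n)) ++ ss.map (fun n => ((2 : Fin 4), n))
        ++ ts.map (fun n => ((3 : Fin 4), n)) with hls
    have hstd : VA.stdMon S.A S.b S.c S.β S.γ ns ms ss ts = S.mon ls := (S.mon_std ns ms ss ts).symm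
    have hsum : 0 < (ls.map Prod.snd).sum := by
      have hmem : k ∈ ls.map Prod.snd := by
        rw [hls]
        simp only [List.map_append, List.map_map, List.mem_append]
        simp only [List.mem_append] at hk
        rcases hk with ((h | h) | h) | h
        · exact Or.inl (Or.inl (Or.inl (by simpa using h)))
        · exact Or.inl (Or.inl (Or.inr (by simpa using h)))
        · exact Or.inl (Or.inr (by simpa using h))
        · exact Or.inr (by simpa using h)
      calc 0 < k := hk0
        _ ≤ (ls.map Prod.snd).sum := List.single_le_sum (fun x _ => Nat.zero_le x) k hmem
    have hlw : ls.length < lwt ls := by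
      rw [lwt_eq]
      omega
    show S.A.circ (-1) S.xv (VA.stdMon S.A S.b S.c S.β S.γ ns ms ss ts) ∈ S.QQ
    rw [hstd]
    have hmem2 := S.wickx_EE (S.mon_mem_EE (w := (lwt ls : ℤ)) rfl le_rfl)
    refine S.EE_le_QQ ?_ hmem2
    omega
  exact hle hv

end Setup
end VA

namespace VA
namespace Setup

variable {V : Type} [AddCommGroup V] [Module ℂ V] (S : Setup V)

lemma move_even (L : Fin 4 × ℕ) (hL : ¬ L.1.val < 2) :
    ∀ (p T : List (Fin 4 × ℕ)), S.mon (L :: (p ++ T)) = S.mon (p ++ L :: T) := by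
  intro p
  induction p with
  | nil => intro T; rfl
  | cons a r ih =>
    intro T
    show S.mon (L :: a :: (r ++ T)) = S.mon (a :: (r ++ L :: T))
    have hsw := S.mon_swap [] (r ++ T) L a
    simp only [List.nil_append] at hsw
    rw [hsw, ksgn, if_neg (fun h => hL h.1), one_smul]
    have h1 : S.mon (a :: L :: (r ++ T)) = S.A.circ (-1) (S.el a) (S.mon (L :: (r ++ T))) := rfl
    rw [h1, ih T]
    rfl

/-- `β^s γ^t` as a letter list. -/
def bls (s t : ℕ) : List (Fin 4 × ℕ) :=
  List.replicate s ((2 : Fin 4), 0) ++ List.replicate t ((3 : Fin 4), 0)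

/-- `b c β^s γ^t` as a letter list. -/
def cls (s t : ℕ) : List (Fin 4 × ℕ) := ((0 : Fin 4), 0) :: ((1 : Fin 4), 0) :: bls s t

lemma wγ_bls (s t : ℕ) :
    S.A.circ (-1) (S.el (3, 0)) (S.mon (bls s t)) = S.mon (bls s (t + 1)) := by
  rw [← S.mon_cons]
  have h := S.move_even (3, 0) (by decide)
    (List.replicate s ((2 : Fin 4), 0)) (List.replicate t ((3 : Fin 4), 0))
  rw [show ((3 : Fin 4), (0:ℕ)) :: bls s t
      = ((3 : Fin 4), (0:ℕ)) :: (List.replicate s ((2 : Fin 4), 0)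
        ++ List.replicate t ((3 : Fin 4), 0)) from rfl, h]
  congr 1

lemma wβ_bls (s t : ℕ) :
    S.A.circ (-1) (S.el (2, 0)) (S.mon (bls s t)) = S.mon (bls (s + 1) t) := by
  rw [← S.mon_cons]
  congr 1

lemma wγ_cls (s t : ℕ) :
    S.A.circ (-1) (S.el (3, 0)) (S.mon (cls s t)) = S.mon (cls s (t + 1)) := by
  rw [← S.mon_cons]
  have h := S.move_even (3, 0) (by decide)
    (((0 : Fin 4), (0:ℕ)) :: ((1 : Fin 4), (0:ℕ)) :: List.replicate s ((2 : Fin 4), 0))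
    (List.replicate t ((3 : Fin 4), 0))
  rw [show ((3 : Fin 4), (0:ℕ)) :: cls s t
      = ((3 : Fin 4), (0:ℕ)) :: ((((0 : Fin 4), (0:ℕ)) :: ((1 : Fin 4), (0:ℕ))
          :: List.replicate s ((2 : Fin 4), 0)) ++ List.replicate t ((3 : Fin 4), 0)) from rfl, h]
  show S.mon (((0 : Fin 4), (0:ℕ)) :: ((1 : Fin 4), (0:ℕ))
      :: (List.replicate s ((2 : Fin 4), 0) ++ ((3 : Fin 4), (0:ℕ))
        :: List.replicate t ((3 : Fin 4), 0))) = _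
  congr 2

lemma wβ_cls (s t : ℕ) :
    S.A.circ (-1) (S.el (2, 0)) (S.mon (cls s t)) = S.mon (cls (s + 1) t) := by
  rw [← S.mon_cons]
  have h := S.move_even (2, 0) (by decide)
    [((0 : Fin 4), (0:ℕ)), ((1 : Fin 4), (0:ℕ))] (bls s t)
  rw [show ((2 : Fin 4), (0:ℕ)) :: cls s t
      = ((2 : Fin 4), (0:ℕ)) :: ([((0 : Fin 4), (0:ℕ)), ((1 : Fin 4), (0:ℕ))] ++ bls s t)
      from rfl, h]
  show S.mon (((0 : Fin 4), (0:ℕ)) :: ((1 : Fin 4), (0:ℕ)) :: (((2 : Fin 4), (0:ℕ)) :: bls s t))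
      = _
  congr 2

lemma wbc_bls (s t : ℕ) :
    S.A.circ (-1) (S.el (0, 0)) (S.A.circ (-1) (S.el (1, 0)) (S.mon (bls s t)))
      = S.mon (cls s t) := rfl

lemma wbc_cls_zero (s t : ℕ) :
    S.A.circ (-1) (S.el (0, 0)) (S.A.circ (-1) (S.el (1, 0)) (S.mon (cls s t))) = 0 := by
  have h1 : S.mon (cls s t)
      = S.A.circ (-1) (S.el (0, 0)) (S.mon (((1 : Fin 4), (0:ℕ)) :: bls s t)) := rfl
  rw [h1, S.wick_swap (1, 0) (0, 0), map_smul,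
    S.wick_sq_zero (0, 0) (by decide), smul_zero]

lemma wickx_bls (s t : ℕ) : ∃ q ∈ S.QQ,
    S.A.circ (-1) S.xv (S.mon (bls s t))
      = S.mon (bls (s + 1) (t + 2)) - S.mon (cls s (t + 1)) + q := by
  have h := S.wickx_mon (bls s t)
  have e1 : S.A.circ (-1) (S.el (2, 0)) (S.A.circ (-1) (S.el (3, 0))
        (S.A.circ (-1) (S.el (3, 0)) (S.mon (bls s t)))) = S.mon (bls (s + 1) (t + 2)) := by
    rw [S.wγ_bls, S.wγ_bls, S.wβ_bls]
  have e2 : S.A.circ (-1) (S.el (0, 0)) (S.A.circ (-1) (S.el (1, 0))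
        (S.A.circ (-1) (S.el (3, 0)) (S.mon (bls s t)))) = S.mon (cls s (t + 1)) := by
    rw [S.wγ_bls, S.wbc_bls]
  rw [e1, e2] at h
  exact ⟨_, h, by abel⟩

lemma wickx_cls (s t : ℕ) : ∃ q ∈ S.QQ,
    S.A.circ (-1) S.xv (S.mon (cls s t)) = S.mon (cls (s + 1) (t + 2)) + q := by
  have h := S.wickx_mon (cls s t)
  have e1 : S.A.circ (-1) (S.el (2, 0)) (S.A.circ (-1) (S.el (3, 0))
        (S.A.circ (-1) (S.el (3, 0)) (S.mon (cls s t)))) = S.mon (cls (s + 1) (t + 2)) := by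
    rw [S.wγ_cls, S.wγ_cls, S.wβ_cls]
  have e2 : S.A.circ (-1) (S.el (0, 0)) (S.A.circ (-1) (S.el (1, 0))
        (S.A.circ (-1) (S.el (3, 0)) (S.mon (cls s t)))) = 0 := by
    rw [S.wγ_cls, S.wbc_cls_zero]
  rw [e1, e2, sub_zero] at h
  exact ⟨_, h, by abel⟩

lemma main (k : ℕ) : ∃ d ∈ S.QQ,
    S.A.wpow S.xv k
      = S.mon (bls k (2 * k)) - (k : ℂ) • S.mon (cls (k - 1) (2 * k - 1)) + d := by
  induction k with
  | zero =>
    refine ⟨0, zero_mem _, ?_⟩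
    norm_num
    rfl
  | succ k ih =>
    obtain ⟨d, hd, hk⟩ := ih
    have hw : S.A.wpow S.xv (k + 1) = S.A.circ (-1) S.xv (S.A.wpow S.xv k) := rfl
    rw [hw, hk, map_add, map_sub, map_smul]
    obtain ⟨q1, hq1, e1⟩ := S.wickx_bls k (2 * k)
    rw [e1]
    have hxd := S.wickx_QQ hd
    rcases Nat.eq_zero_or_pos k with hk0 | hkpos
    · subst hk0
      refine ⟨q1 + S.A.circ (-1) S.xv d, add_mem hq1 hxd, ?_⟩
      norm_num
      module
    · obtain ⟨q2, hq2, e2⟩ := S.wickx_cls (k - 1) (2 * k - 1)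
      have hidx1 : (k - 1) + 1 = k := by omega
      have hidx2 : (2 * k - 1) + 2 = 2 * k + 1 := by omega
      rw [hidx1, hidx2] at e2
      rw [e2]
      refine ⟨q1 - (k : ℂ) • q2 + S.A.circ (-1) S.xv d,
        add_mem (sub_mem hq1 (Submodule.smul_mem _ _ hq2)) hxd, ?_⟩
      have hidx3 : 2 * (k + 1) = 2 * k + 2 := by ring
      have hidx4 : (k + 1) - 1 = k := rfl
      have hidx5 : 2 * (k + 1) - 1 = 2 * k + 1 := by omega
      rw [hidx5, hidx4, hidx3]
      push_cast
      module

end Setup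
end VA

namespace VA
namespace Setup

variable {V : Type} [AddCommGroup V] [Module ℂ V] (S : Setup V)

lemma std_bls (s t : ℕ) :
    S.mon (bls s t)
      = VA.stdMon S.A S.b S.c S.β S.γ [] [] (List.replicate s 0) (List.replicate t 0) := by
  rw [← S.mon_std]
  congr 1
  simp [bls, List.map_replicate]

lemma std_cls (s t : ℕ) :
    S.mon (cls s t)
      = VA.stdMon S.A S.b S.c S.β S.γ [0] [0] (List.replicate s 0) (List.replicate t 0) := by
  rw [← S.mon_std]
  congr 1
  simp [cls, bls, List.map_replicate]

end Setup
end VA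

theorem stmt14' (V : Type) [AddCommGroup V] [Module ℂ V] (A : VA V)
    (b c β γ : V)
    (hb : b ∈ A.odd) (hc : c ∈ A.odd)
    (hbc0 : A.circ 0 b c = A.one) (hbc : ∀ n : ℤ, 1 ≤ n → A.circ n b c = 0)
    (hcb0 : A.circ 0 c b = A.one) (hcb : ∀ n : ℤ, 1 ≤ n → A.circ n c b = 0)
    (hbb : ∀ n : ℤ, 0 ≤ n → A.circ n b b = 0)
    (hcc : ∀ n : ℤ, 0 ≤ n → A.circ n c c = 0)
    (hβ : β ∈ A.even) (hγ : γ ∈ A.even)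
    (hβγ0 : A.circ 0 β γ = A.one) (hβγ : ∀ n : ℤ, 1 ≤ n → A.circ n β γ = 0)
    (hγβ0 : A.circ 0 γ β = -A.one) (hγβ : ∀ n : ℤ, 1 ≤ n → A.circ n γ β = 0)
    (hββ : ∀ n : ℤ, 0 ≤ n → A.circ n β β = 0)
    (hγγ : ∀ n : ℤ, 0 ≤ n → A.circ n γ γ = 0)
    (hcross : ∀ n : ℤ, 0 ≤ n →
      A.circ n b β = 0 ∧ A.circ n b γ = 0 ∧ A.circ n c β = 0 ∧ A.circ n c γ = 0 ∧
      A.circ n β b = 0 ∧ A.circ n γ b = 0 ∧ A.circ n β c = 0 ∧ A.circ n γ c = 0)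
    (x : V) (hx : x = A.wick β (A.wick γ γ) - A.wick b (A.wick c γ) + (3 / 2 : ℂ) • A.D γ)
    :
    ∀ k : ℕ, ∃ d ∈ Submodule.span ℂ (VA.DSet A b c β γ),
      A.wpow x k
        = A.stdMon b c β γ [] [] (List.replicate k 0) (List.replicate (2 * k) 0)
          - (k : ℂ) • A.stdMon b c β γ [0] [0]
              (List.replicate (k - 1) 0) (List.replicate (2 * k - 1) 0)
          + d := by
  intro k
  set S : VA.Setup V := ⟨A, b, c, β, γ, hb, hc, hbc0, hbc, hcb0, hcb, hbb, hcc, hβ, hγ,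
    hβγ0, hβγ, hγβ0, hγβ, hββ, hγγ, hcross⟩ with hS
  have hxv : x = S.xv := by rw [hx]; rfl
  obtain ⟨d, hd, hmain⟩ := S.main k
  refine ⟨d, hd, ?_⟩
  rw [hxv]
  show S.A.wpow S.xv k
      = VA.stdMon S.A S.b S.c S.β S.γ [] [] (List.replicate k 0) (List.replicate (2 * k) 0)
        - (k : ℂ) • VA.stdMon S.A S.b S.c S.β S.γ [0] [0]
            (List.replicate (k - 1) 0) (List.replicate (2 * k - 1) 0)
        + d
  rw [hmain, S.std_bls, S.std_cls]

/-- For each `k ≥ 0`, the Wick power `xᵏ` of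
`x = :βγ²: - :bcγ: + (3/2)∂γ` equals `:βᵏγ²ᵏ: - k :bc β^{k-1} γ^{2k-1}:` plus an element
of `𝒟`. -/
theorem stmt14 (V : Type) [AddCommGroup V] [Module ℂ V] (A : VA V)
    (b c β γ : V)
    (hb : b ∈ A.odd) (hc : c ∈ A.odd)
    (hbc0 : A.circ 0 b c = A.one) (hbc : ∀ n : ℤ, 1 ≤ n → A.circ n b c = 0)
    (hcb0 : A.circ 0 c b = A.one) (hcb : ∀ n : ℤ, 1 ≤ n → A.circ n c b = 0)
    (hbb : ∀ n : ℤ, 0 ≤ n → A.circ n b b = 0)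
    (hcc : ∀ n : ℤ, 0 ≤ n → A.circ n c c = 0)
    (hβ : β ∈ A.even) (hγ : γ ∈ A.even)
    (hβγ0 : A.circ 0 β γ = A.one) (hβγ : ∀ n : ℤ, 1 ≤ n → A.circ n β γ = 0)
    (hγβ0 : A.circ 0 γ β = -A.one) (hγβ : ∀ n : ℤ, 1 ≤ n → A.circ n γ β = 0)
    (hββ : ∀ n : ℤ, 0 ≤ n → A.circ n β β = 0)
    (hγγ : ∀ n : ℤ, 0 ≤ n → A.circ n γ γ = 0)
    (hcross : ∀ n : ℤ, 0 ≤ n →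
      A.circ n b β = 0 ∧ A.circ n b γ = 0 ∧ A.circ n c β = 0 ∧ A.circ n c γ = 0 ∧
      A.circ n β b = 0 ∧ A.circ n γ b = 0 ∧ A.circ n β c = 0 ∧ A.circ n γ c = 0)
    (LS LE LW J : V)
    (hLS : LS = A.wick (A.D β) γ + (2 : ℂ) • A.wick β (A.D γ))
    (hLE : LE = -(A.wick (A.D b) c) - (2 : ℂ) • A.wick b (A.D c))
    (hLW : LW = LE + LS)
    (hJ : J = A.wick (LS + (1 / 2 : ℂ) • LE) c + (3 / 4 : ℂ) • A.D (A.D c))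
    (x : V) (hx : x = A.wick β (A.wick γ γ) - A.wick b (A.wick c γ) + (3 / 2 : ℂ) • A.D γ)
    :
    ∀ k : ℕ, ∃ d ∈ Submodule.span ℂ (VA.DSet A b c β γ),
      A.wpow x k
        = A.stdMon b c β γ [] [] (List.replicate k 0) (List.replicate (2 * k) 0)
          - (k : ℂ) • A.stdMon b c β γ [0] [0]
              (List.replicate (k - 1) 0) (List.replicate (2 * k - 1) 0)
          + d := by
  exact stmt14' V A b c β γ hb hc hbc0 hbc hcb0 hcb hbb hcc hβ hγ hβγ0 hβγ hγβ0 hγβ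
    hββ hγγ hcross x hx
end
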